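/- arXiv:math/0410142 — 7 statements merged into one kernel-verified Lean document; each statement's English description precedes it below -/
import Mathlib

section
/- Let h ≥ 0 be harmonic for kernel P and suppose h(x) ≤ s. Define σ_s = inf{i ≥ 0 : h(X_i) > s}. Then P_x(σ_s = ∞) > 0; that is, with positive probability the chain started at x satisfies h(X_i) ≤ s for all i ≥ 0. -/
open MeasureTheory ProbabilityTheory ENNReal Filter

/-- `μ` is the law of the Markov chain with transition kernel `P` started at `x`:
it is a probability measure, starts at `x`, and satisfies the Markov property. -/
structure IsMarkovChainLawAt {S : Type*} [MeasurableSpace S] (P : ProbabilityTheory.Kernel S S)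
    (μ : MeasureTheory.Measure (ℕ → S)) (x : S) : Prop where
  isProb : IsProbabilityMeasure μ
  start : μ {ω | ω 0 = x} = 1
  markov : ∀ (n : ℕ) (F : (Fin (n + 1) → S) → ℝ≥0∞) (g : S → ℝ≥0∞),
    Measurable F → Measurable g →
    ∫⁻ ω, F (fun i => ω i) * g (ω (n + 1)) ∂μ
      = ∫⁻ ω, F (fun i => ω i) * ∫⁻ y, g y ∂(P (ω n)) ∂μ

/-- `h` is harmonic for the kernel `P`: `h x = ∫ P(x, dy) h(y)` for all `x`. -/
def Harmonic {S : Type*} [MeasurableSpace S] (P : ProbabilityTheory.Kernel S S)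
    (h : S → ℝ) : Prop :=
  ∀ x, MeasureTheory.Integrable h (P x) ∧ h x = ∫ y, h y ∂(P x)

/-- Lemma 4: if `h ≥ 0` is harmonic for `P` and `h x ≤ s`, then with positive probability
the chain started at `x` satisfies `h(X_i) ≤ s` for all `i ≥ 0` (i.e. `P_x(σ_s = ∞) > 0`). -/
theorem prob_stay_below_pos {S : Type*} [MeasurableSpace S]
    (P : ProbabilityTheory.Kernel S S) [IsMarkovKernel P]
    (Plaw : S → MeasureTheory.Measure (ℕ → S))
    (hlaw : ∀ x, IsMarkovChainLawAt P (Plaw x) x)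
    (h : S → ℝ) (hmeas : Measurable h) (hnonneg : ∀ y, 0 ≤ h y)
    (hharm : Harmonic P h) (x : S) (s : ℝ) (hs : 0 ≤ s) (hxs : h x ≤ s) :
    0 < Plaw x {ω | ∀ i, h (ω i) ≤ s} := by
  classical
  obtain ⟨hprob, hstart, hmarkov⟩ := hlaw x
  set μ := Plaw x with hμdef
  -- relevant sets
  set stay : ℕ → Set (ℕ → S) := fun n => {ω | ∀ i < n, h (ω i) ≤ s} with hstaydef
  set hitS : ℕ → Set (ℕ → S) := fun k => stay k ∩ {ω | s < h (ω k)} with hhitdef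
  have hmeas_coord : ∀ i : ℕ, Measurable fun ω : ℕ → S => h (ω i) :=
    fun i => hmeas.comp (measurable_pi_apply i)
  have hstay_meas : ∀ n, MeasurableSet (stay n) := by
    intro n
    have : stay n = ⋂ i ∈ Finset.range n, {ω : ℕ → S | h (ω i) ≤ s} := by
      ext ω; simp [hstaydef]
    rw [this]
    exact Finset.measurableSet_biInter _ fun i _ =>
      measurableSet_le (hmeas_coord i) measurable_const
  have hhit_meas : ∀ k, MeasurableSet (hitS k) := fun k =>
    (hstay_meas k).inter (measurableSet_lt measurable_const (hmeas_coord k))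
  -- harmonicity in lintegral form
  have hharm' : ∀ z : S, ∫⁻ y, ENNReal.ofReal (h y) ∂(P z) = ENNReal.ofReal (h z) := by
    intro z
    rw [← MeasureTheory.ofReal_integral_eq_lintegral_ofReal (hharm z).1
        (Filter.Eventually.of_forall fun y => hnonneg y), ← (hharm z).2]
  -- abbreviations for the integrals
  set term : ℕ → ℝ≥0∞ := fun k =>
    ∫⁻ ω, (hitS k).indicator (fun ω => ENNReal.ofReal (h (ω k))) ω ∂μ with htermdef
  set st : ℕ → ℝ≥0∞ := fun n =>
    ∫⁻ ω, (stay n).indicator (fun ω => ENNReal.ofReal (h (ω n))) ω ∂μ with hstdef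
  -- one step: st n = term n + st (n+1)
  have hstep : ∀ n, st n = term n + st (n + 1) := by
    intro n
    have hsplit : ∀ ω : ℕ → S,
        (stay n).indicator (fun ω => ENNReal.ofReal (h (ω n))) ω
          = (hitS n).indicator (fun ω => ENNReal.ofReal (h (ω n))) ω
            + (stay (n + 1)).indicator (fun ω => ENNReal.ofReal (h (ω n))) ω := by
      intro ω
      by_cases hωn : ω ∈ stay n
      · by_cases hlt : s < h (ω n)
        · have h1 : ω ∈ hitS n := ⟨hωn, hlt⟩
          have h2 : ω ∉ stay (n + 1) := by
            intro hc
            exact absurd (hc n (Nat.lt_succ_self n)) (not_le_of_gt hlt)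
          rw [Set.indicator_of_mem hωn, Set.indicator_of_mem h1,
            Set.indicator_of_notMem h2, add_zero]
        · have h1 : ω ∉ hitS n := fun hc => hlt hc.2
          have h2 : ω ∈ stay (n + 1) := by
            intro i hi
            rcases Nat.lt_succ_iff_lt_or_eq.mp hi with hi' | hi'
            · exact hωn i hi'
            · subst hi'; exact le_of_not_gt hlt
          rw [Set.indicator_of_mem hωn, Set.indicator_of_mem h2,
            Set.indicator_of_notMem h1, zero_add]
      · have h1 : ω ∉ hitS n := fun hc => hωn hc.1
        have h2 : ω ∉ stay (n + 1) := fun hc => hωn (fun i hi => hc i (hi.trans (Nat.lt_succ_self n)))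
        rw [Set.indicator_of_notMem hωn, Set.indicator_of_notMem h1,
          Set.indicator_of_notMem h2, add_zero]
    -- markov step: move from coordinate n to coordinate n+1 on stay (n+1)
    have hmark : ∫⁻ ω, (stay (n + 1)).indicator (fun ω => ENNReal.ofReal (h (ω n))) ω ∂μ
        = st (n + 1) := by
      set F : (Fin (n + 1) → S) → ℝ≥0∞ :=
        fun v => Set.indicator {v : Fin (n + 1) → S | ∀ i, h (v i) ≤ s} 1 v with hFdef
      have hFset : MeasurableSet {v : Fin (n + 1) → S | ∀ i, h (v i) ≤ s} := by
        have : {v : Fin (n + 1) → S | ∀ i, h (v i) ≤ s}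
            = ⋂ i : Fin (n + 1), {v | h (v i) ≤ s} := by ext v; simp
        rw [this]
        exact MeasurableSet.iInter fun i =>
          measurableSet_le (hmeas.comp (measurable_pi_apply i)) measurable_const
      have hF : Measurable F := Measurable.indicator measurable_const hFset
      have hg : Measurable fun y => ENNReal.ofReal (h y) := hmeas.ennreal_ofReal
      have hmem : ∀ ω : ℕ → S,
          ((fun i : Fin (n + 1) => ω ↑i) ∈ {v : Fin (n + 1) → S | ∀ i, h (v i) ≤ s})
            ↔ ω ∈ stay (n + 1) := by
        intro ω
        constructor
        · intro hv i hi
          exact hv ⟨i, hi⟩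
        · intro hω i
          exact hω i i.isLt
      have hFmul : ∀ (ω : ℕ → S) (z : ℝ≥0∞),
          F (fun i : Fin (n + 1) => ω ↑i) * z
            = (stay (n + 1)).indicator (fun _ => z) ω := by
        intro ω z
        by_cases hω : ω ∈ stay (n + 1)
        · rw [Set.indicator_of_mem hω, hFdef]
          simp only [Set.indicator_of_mem ((hmem ω).mpr hω), Pi.one_apply, one_mul]
        · rw [Set.indicator_of_notMem hω, hFdef]
          simp only [Set.indicator_of_notMem (fun hc => hω ((hmem ω).mp hc)), zero_mul]
      have := hmarkov n F (fun y => ENNReal.ofReal (h y)) hF hg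
      calc ∫⁻ ω, (stay (n + 1)).indicator (fun ω => ENNReal.ofReal (h (ω n))) ω ∂μ
          = ∫⁻ ω, F (fun i : Fin (n + 1) => ω ↑i) * ∫⁻ y, ENNReal.ofReal (h y) ∂(P (ω n)) ∂μ := by
            refine lintegral_congr fun ω => ?_
            rw [hharm' (ω n), hFmul ω]
            by_cases hω : ω ∈ stay (n + 1)
            · rw [Set.indicator_of_mem hω, Set.indicator_of_mem hω]
            · rw [Set.indicator_of_notMem hω, Set.indicator_of_notMem hω]
        _ = ∫⁻ ω, F (fun i : Fin (n + 1) => ω ↑i) * ENNReal.ofReal (h (ω (n + 1))) ∂μ := this.symm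
        _ = st (n + 1) := by
            refine lintegral_congr fun ω => ?_
            rw [hFmul ω]
            by_cases hω : ω ∈ stay (n + 1)
            · rw [Set.indicator_of_mem hω, Set.indicator_of_mem hω]
            · rw [Set.indicator_of_notMem hω, Set.indicator_of_notMem hω]
    calc st n = ∫⁻ ω, ((hitS n).indicator (fun ω => ENNReal.ofReal (h (ω n))) ω
            + (stay (n + 1)).indicator (fun ω => ENNReal.ofReal (h (ω n))) ω) ∂μ := by
          exact lintegral_congr fun ω => hsplit ω
      _ = term n + ∫⁻ ω, (stay (n + 1)).indicator (fun ω => ENNReal.ofReal (h (ω n))) ω ∂μ := by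
          rw [lintegral_add_left]
          exact (Measurable.indicator (hmeas_coord n).ennreal_ofReal (hhit_meas n))
      _ = term n + st (n + 1) := by rw [hmark]
  -- base: st 0 = ofReal (h x)
  have hbase : st 0 = ENNReal.ofReal (h x) := by
    have h00 : stay 0 = Set.univ := by
      ext ω; simp [hstaydef]
    have hsub : {ω : ℕ → S | ω 0 = x} ⊆ {ω : ℕ → S | h (ω 0) = h x} := by
      intro ω hω; simp only [Set.mem_setOf_eq] at *; rw [hω]
    have hAm : MeasurableSet {ω : ℕ → S | h (ω 0) = h x} :=
      (hmeas_coord 0) (measurableSet_singleton (h x))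
    have hA1 : μ {ω : ℕ → S | h (ω 0) = h x} = 1 :=
      le_antisymm prob_le_one (hstart ▸ measure_mono hsub)
    have hae : ∀ᵐ ω ∂μ, h (ω 0) = h x := by
      rw [ae_iff]
      have : {ω : ℕ → S | ¬ h (ω 0) = h x} = {ω : ℕ → S | h (ω 0) = h x}ᶜ := rfl
      rw [this, measure_compl hAm (measure_ne_top μ _), hA1, measure_univ, tsub_self]
    calc st 0 = ∫⁻ ω, ENNReal.ofReal (h (ω 0)) ∂μ := by
          rw [hstdef]; simp only [h00, Set.indicator_univ]
      _ = ∫⁻ _, ENNReal.ofReal (h x) ∂μ :=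
          lintegral_congr_ae (hae.mono fun ω hω => by simp only [hω])
      _ = ENNReal.ofReal (h x) := by rw [lintegral_const, measure_univ, mul_one]
  -- key identity
  have key : ∀ n, (∑ k ∈ Finset.range n, term k) + st n = ENNReal.ofReal (h x) := by
    intro n
    induction n with
    | zero => simpa using hbase
    | succ n ih =>
      rw [Finset.sum_range_succ, add_assoc, ← hstep n, ih]
  -- partial sums are bounded by ofReal s
  have hsum_le : ∀ n, (∑ k ∈ Finset.range n, term k) ≤ ENNReal.ofReal s := by
    intro n
    calc (∑ k ∈ Finset.range n, term k) ≤ (∑ k ∈ Finset.range n, term k) + st n := le_self_add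
      _ = ENNReal.ofReal (h x) := key n
      _ ≤ ENNReal.ofReal s := ENNReal.ofReal_le_ofReal hxs
  have htsum_le : (∑' k, term k) ≤ ENNReal.ofReal s := by
    rw [ENNReal.tsum_eq_iSup_nat]
    exact iSup_le hsum_le
  -- the function f = h(X_σ) on {σ < ∞}
  set f : (ℕ → S) → ℝ≥0∞ :=
    fun ω => ∑' k, (hitS k).indicator (fun ω => ENNReal.ofReal (h (ω k))) ω with hfdef
  have hf_meas : Measurable f :=
    Measurable.ennreal_tsum fun k =>
      Measurable.indicator (hmeas_coord k).ennreal_ofReal (hhit_meas k)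
  have hf_int : ∫⁻ ω, f ω ∂μ ≤ ENNReal.ofReal s := by
    rw [hfdef]
    rw [lintegral_tsum fun k =>
      (Measurable.indicator (hmeas_coord k).ennreal_ofReal (hhit_meas k)).aemeasurable]
    exact htsum_le
  -- suppose the conclusion fails
  by_contra hcon
  have hzero : μ {ω | ∀ i, h (ω i) ≤ s} = 0 := by
    exact le_antisymm (not_lt.mp hcon) zero_le
  have hae_escape : ∀ᵐ ω ∂μ, ¬ ∀ i, h (ω i) ≤ s := by
    rw [ae_iff]
    simpa using hzero
  have hae_lt : ∀ᵐ ω ∂μ, ENNReal.ofReal s < f ω := by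
    refine hae_escape.mono fun ω hω => ?_
    push_neg at hω
    have hex : ∃ i, s < h (ω i) := hω
    set k := Nat.find hex with hkdef
    have hk : s < h (ω k) := Nat.find_spec hex
    have hmemk : ω ∈ hitS k := by
      refine ⟨fun i hi => ?_, hk⟩
      exact le_of_not_gt (Nat.find_min hex hi)
    have hle : (hitS k).indicator (fun ω => ENNReal.ofReal (h (ω k))) ω ≤ f ω :=
      ENNReal.le_tsum k
    rw [Set.indicator_of_mem hmemk] at hle
    refine lt_of_lt_of_le ?_ hle
    exact (ENNReal.ofReal_lt_ofReal_iff (lt_of_le_of_lt hs hk)).mpr hk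
  -- but then ∫ f ≤ ofReal s = ∫ const, so f = const a.e., contradiction
  have hconst_le : (fun _ : ℕ → S => ENNReal.ofReal s) ≤ᵐ[μ] f :=
    hae_lt.mono fun ω hω => hω.le
  have hconst_int : ∫⁻ _, ENNReal.ofReal s ∂μ = ENNReal.ofReal s := by
    rw [lintegral_const, measure_univ, mul_one]
  have heq : (fun _ : ℕ → S => ENNReal.ofReal s) =ᵐ[μ] f := by
    refine ae_eq_of_ae_le_of_lintegral_le hconst_le ?_ hf_meas.aemeasurable ?_
    · rw [hconst_int]; exact ENNReal.ofReal_ne_top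
    · rw [hconst_int]; exact hf_int
  have : ∀ᵐ ω ∂μ, False := by
    filter_upwards [heq, hae_lt] with ω h1 h2
    exact absurd h1 (ne_of_lt h2)
  have hne : (μ : Measure (ℕ → S)) ≠ 0 := IsProbabilityMeasure.ne_zero μ
  obtain ⟨ω, hω⟩ := this.exists
  exact hω
end

section
/- Under P_x, the chain (X_n) conditioned on the event {h(X_i) ≤ s for all i ∈ ℕ₀} is a Markov chain with transition kernel Q_s(x,dy) = q_s(y) P(x,dy) / q_s(x); explicitly, for all n and measurable sets, P_x(X_1 ∈ dx_1, …, X_n ∈ dx_n | h(X_i) ≤ s ∀ i) = Q_s(x,dx_1) ⋯ Q_s(x_{n-1},dx_n). -/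
open MeasureTheory ProbabilityTheory ENNReal Filter

/-- The iterated integral `Q_s(x, dx_{k}) ⋯ Q_s(x_{k+n-1}, dx_{k+n})` of the Doob transform
`Q_s(x,dy) = q_s(y) P(x,dy) / q_s(x)` over the sets `B k, …, B (k+n-1)`. -/
noncomputable def iterQ {S : Type*} [MeasurableSpace S] (P : ProbabilityTheory.Kernel S S)
    (qs : S → ℝ≥0∞) (B : ℕ → Set S) : ℕ → ℕ → S → ℝ≥0∞
  | _, 0, _ => 1
  | k, n + 1, x => ∫⁻ y in B k, (qs y / qs x) * iterQ P qs B (k + 1) n y ∂(P x)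

set_option linter.unusedSectionVars false
set_option maxHeartbeats 1000000

namespace CondChain

variable {S : Type*} [MeasurableSpace S]

noncomputable def Rfun (P : ProbabilityTheory.Kernel S S) :
    (ℕ → Set S) → ℕ → (S → ℝ≥0∞) → S → ℝ≥0∞
  | _, 0, g, x => g x
  | D, n + 1, g, x => (D 0).indicator 1 x * ∫⁻ y, Rfun P (fun i => D (i + 1)) n g y ∂(P x)

def cyl (D : ℕ → Set S) (m : ℕ) : Set (ℕ → S) := {ω | ∀ i ≤ m, ω i ∈ D i}

variable (P : ProbabilityTheory.Kernel S S) [IsMarkovKernel P]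

lemma cyl_measurableSet {D : ℕ → Set S} (hD : ∀ i, MeasurableSet (D i)) (m : ℕ) :
    MeasurableSet (cyl D m) := by
  have : cyl D m = ⋂ i, ⋂ (_ : i ≤ m), (fun ω : ℕ → S => ω i) ⁻¹' D i := by
    ext ω; simp [cyl]
  rw [this]
  exact MeasurableSet.iInter fun i => MeasurableSet.iInter fun _ =>
    (measurable_pi_apply i) (hD i)

lemma indicator_cyl (D : ℕ → Set S) (m : ℕ) (ω : ℕ → S) :
    (cyl D m).indicator (1 : (ℕ → S) → ℝ≥0∞) ω
      = (∏ i ∈ Finset.range m, (D i).indicator 1 (ω i)) * (D m).indicator 1 (ω m) := by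
  by_cases hω : ω ∈ cyl D m
  · rw [Set.indicator_of_mem hω,
      Finset.prod_eq_one (fun i hi =>
        Set.indicator_of_mem (hω i (Finset.mem_range.mp hi).le) 1),
      Set.indicator_of_mem (hω m le_rfl)]
    simp
  · rw [Set.indicator_of_notMem hω]
    simp only [cyl, Set.mem_setOf_eq, not_forall] at hω
    obtain ⟨i, him, hiD⟩ := hω
    rcases eq_or_lt_of_le him with rfl | hlt
    · rw [Set.indicator_of_notMem hiD]; simp
    · rw [Finset.prod_eq_zero (Finset.mem_range.mpr hlt)
        (Set.indicator_of_notMem hiD 1)]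
      simp

lemma Rfun_peel : ∀ (n : ℕ) (D : ℕ → Set S) (g : S → ℝ≥0∞) (x : S),
    Rfun P D (n + 1) g x
      = Rfun P D n (fun z => (D n).indicator 1 z * ∫⁻ y, g y ∂(P z)) x := by
  intro n
  induction n with
  | zero => intro D g x; simp [Rfun]
  | succ n ih =>
    intro D g x
    show (D 0).indicator 1 x * ∫⁻ y, Rfun P (fun i => D (i + 1)) (n + 1) g y ∂(P x) = _
    simp only [Rfun]
    congr 1
    exact lintegral_congr fun y => ih (fun i => D (i + 1)) g y

variable {Plaw : S → MeasureTheory.Measure (ℕ → S)}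

lemma lint_eval_zero (hlaw : ∀ x, IsMarkovChainLawAt P (Plaw x) x)
    {g : S → ℝ≥0∞} (hg : Measurable g) (x : S) :
    ∫⁻ ω, g (ω 0) ∂(Plaw x) = g x := by
  haveI := (hlaw x).isProb
  have hW : MeasurableSet {ω : ℕ → S | g (ω 0) = g x} :=
    (hg.comp (measurable_pi_apply 0)) (measurableSet_singleton (g x))
  have h1 : Plaw x {ω : ℕ → S | g (ω 0) = g x} = 1 := by
    refine le_antisymm prob_le_one ?_
    rw [← (hlaw x).start]
    exact measure_mono fun ω (hω : ω 0 = x) => by simp [Set.mem_setOf_eq, hω]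
  have h0 : Plaw x {ω : ℕ → S | g (ω 0) = g x}ᶜ = 0 := (prob_compl_eq_zero_iff hW).mpr h1
  have hae : (fun ω : ℕ → S => g (ω 0)) =ᵐ[Plaw x] fun _ => g x := by
    refine (ae_iff.mpr ?_)
    exact h0
  rw [lintegral_congr_ae hae, lintegral_const, measure_univ, mul_one]

lemma meq (hlaw : ∀ x, IsMarkovChainLawAt P (Plaw x) x)
    (D : ℕ → Set S) (hD : ∀ i, MeasurableSet (D i)) :
    ∀ (m : ℕ) (x : S), Plaw x (cyl D m) = Rfun P D m (Set.indicator (D m) 1) x := by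
  suffices key : ∀ (m : ℕ) (g : S → ℝ≥0∞), Measurable g → ∀ x,
      ∫⁻ ω, (∏ i ∈ Finset.range m, (D i).indicator 1 (ω i)) * g (ω m) ∂(Plaw x)
        = Rfun P D m g x by
    intro m x
    have h1 : Plaw x (cyl D m) = ∫⁻ ω, (cyl D m).indicator 1 ω ∂(Plaw x) := by
      rw [lintegral_indicator (cyl_measurableSet hD m)]
      simp
    rw [h1, lintegral_congr (fun ω => indicator_cyl D m ω)]
    exact key m (Set.indicator (D m) 1) (measurable_one.indicator (hD m)) x
  intro m
  induction m with
  | zero =>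
    intro g hg x
    simp only [Finset.range_zero, Finset.prod_empty, one_mul]
    rw [lint_eval_zero P hlaw hg x]
    rfl
  | succ m ih =>
    intro g hg x
    have hF : Measurable fun v : Fin (m + 1) → S =>
        ∏ i : Fin (m + 1), (D i).indicator (1 : S → ℝ≥0∞) (v i) :=
      Finset.measurable_prod _ fun i _ =>
        (measurable_one.indicator (hD i)).comp (measurable_pi_apply i)
    have hmark := (hlaw x).markov m
      (fun v : Fin (m + 1) → S => ∏ i : Fin (m + 1), (D i).indicator 1 (v i)) g hF hg
    have hrw : ∀ ω : ℕ → S,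
        (∏ i : Fin (m + 1), (D i).indicator (1 : S → ℝ≥0∞) (ω i))
          = ∏ i ∈ Finset.range (m + 1), (D i).indicator 1 (ω i) :=
      fun ω => Fin.prod_univ_eq_prod_range (fun i => (D i).indicator 1 (ω i)) (m + 1)
    rw [show (∫⁻ ω, (∏ i ∈ Finset.range (m + 1), (D i).indicator 1 (ω i)) * g (ω (m + 1))
          ∂(Plaw x))
        = ∫⁻ ω, (∏ i : Fin (m + 1), (D i).indicator 1 (ω i)) * g (ω (m + 1)) ∂(Plaw x)
      from lintegral_congr fun ω => by rw [hrw ω]]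
    rw [hmark]
    have h2 : ∀ ω : ℕ → S,
        (∏ i : Fin (m + 1), (D i).indicator (1 : S → ℝ≥0∞) (ω i)) * ∫⁻ y, g y ∂(P (ω m))
          = (∏ i ∈ Finset.range m, (D i).indicator 1 (ω i))
              * ((D m).indicator 1 (ω m) * ∫⁻ y, g y ∂(P (ω m))) := by
      intro ω
      rw [hrw ω, Finset.prod_range_succ, mul_assoc]
    rw [lintegral_congr h2,
      ih (fun z => (D m).indicator 1 z * ∫⁻ y, g y ∂(P z))
        ((measurable_one.indicator (hD m)).mul (Measurable.lintegral_kernel hg)) x,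
      ← Rfun_peel]

end CondChain

namespace CondChain

variable {S : Type*} [MeasurableSpace S]
variable (P : ProbabilityTheory.Kernel S S) [IsMarkovKernel P]
variable {Plaw : S → MeasureTheory.Measure (ℕ → S)}

noncomputable def iterN (P : ProbabilityTheory.Kernel S S) (qs : S → ℝ≥0∞) :
    (ℕ → Set S) → ℕ → S → ℝ≥0∞
  | _, 0, x => qs x
  | E, m + 1, x => ∫⁻ y in E 0, iterN P qs (fun i => E (i + 1)) m y ∂(P x)

lemma iterN_congr (qs : S → ℝ≥0∞) : ∀ (n : ℕ) (E E' : ℕ → Set S) (x : S),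
    (∀ i < n, E i = E' i) → iterN P qs E n x = iterN P qs E' n x := by
  intro n
  induction n with
  | zero => intro E E' x _; simp [iterN]
  | succ n ih =>
    intro E E' x hEE
    simp only [iterN]
    rw [hEE 0 (Nat.succ_pos n)]
    exact lintegral_congr fun y => ih _ _ y fun i hi => hEE (i + 1) (by omega)

lemma cyl_antitone (D : ℕ → Set S) : Antitone (cyl D) :=
  fun _ _ hab _ hω i hi => hω i (hi.trans hab)

lemma Rfun_meas : ∀ (n : ℕ) (D : ℕ → Set S) (g : S → ℝ≥0∞),
    (∀ i, MeasurableSet (D i)) → Measurable g → Measurable (Rfun P D n g) := by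
  intro n
  induction n with
  | zero => intro D g hD hg; simpa [Rfun] using hg
  | succ n ih =>
    intro D g hD hg
    simp only [Rfun]
    exact (measurable_one.indicator (hD 0)).mul
      (Measurable.lintegral_kernel (ih _ g (fun i => hD (i + 1)) hg))

lemma indicator_mul_eq {E : Set S} (f : S → ℝ≥0∞) (y : S) :
    E.indicator 1 y * f y = E.indicator f y := by
  by_cases hy : y ∈ E <;> simp [hy]

lemma measure_iInter_cyl (hlaw : ∀ x, IsMarkovChainLawAt P (Plaw x) x)
    {D : ℕ → Set S} (hD : ∀ i, MeasurableSet (D i)) (x : S) :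
    Plaw x (⋂ m, cyl D m) = ⨅ m, Plaw x (cyl D m) := by
  haveI := (hlaw x).isProb
  exact (cyl_antitone D).measure_iInter (fun m => (cyl_measurableSet hD m).nullMeasurableSet)
    ⟨0, measure_ne_top _ _⟩

lemma iInter_cyl (D : ℕ → Set S) : (⋂ m, cyl D m) = {ω : ℕ → S | ∀ i, ω i ∈ D i} := by
  ext ω
  simp only [Set.mem_iInter, Set.mem_setOf_eq, cyl]
  exact ⟨fun H i => H i i le_rfl, fun H m i _ => H i⟩

/-- Lemma A: closed form for the decreasing limit of cylinder probabilities. -/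
lemma limA (hlaw : ∀ x, IsMarkovChainLawAt P (Plaw x) x)
    (Ss : Set S) (qs : S → ℝ≥0∞)
    (hqs : ∀ y, qs y = Plaw y {ω : ℕ → S | ∀ i, ω i ∈ Ss}) :
    ∀ (n : ℕ) (D : ℕ → Set S), (∀ i, MeasurableSet (D i)) → (∀ i, D i ⊆ Ss) →
      (∀ i, n < i → D i = Ss) → ∀ x,
      (⨅ m, Plaw x (cyl D m))
        = (D 0).indicator 1 x * iterN P qs (fun i => D (i + 1)) n x := by
  intro n
  induction n with
  | zero =>
    intro D hD hDsub hDtail x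
    haveI := (hlaw x).isProb
    have hicap : (⋂ m, cyl D m)
        = ((fun ω : ℕ → S => ω 0) ⁻¹' D 0) ∩ {ω : ℕ → S | ∀ i, ω i ∈ Ss} := by
      rw [iInter_cyl]
      ext ω
      simp only [Set.mem_setOf_eq, Set.mem_inter_iff, Set.mem_preimage]
      constructor
      · intro H
        refine ⟨H 0, fun i => ?_⟩
        rcases Nat.eq_zero_or_pos i with rfl | hi
        · exact hDsub 0 (H 0)
        · rw [← hDtail i hi]; exact H i
      · rintro ⟨h0, H⟩ i
        rcases Nat.eq_zero_or_pos i with rfl | hi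
        · exact h0
        · rw [hDtail i hi]; exact H i
    rw [← measure_iInter_cyl P hlaw hD x, hicap]
    have hW : MeasurableSet ((fun ω : ℕ → S => ω 0) ⁻¹' D 0) :=
      (measurable_pi_apply 0) (hD 0)
    by_cases hx : x ∈ D 0
    · rw [Set.indicator_of_mem hx]
      have hWc : Plaw x ((fun ω : ℕ → S => ω 0) ⁻¹' D 0)ᶜ = 0 := by
        refine (prob_compl_eq_zero_iff hW).mpr ?_
        refine le_antisymm prob_le_one ?_
        rw [← (hlaw x).start]
        exact measure_mono fun ω (hω : ω 0 = x) => by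
          simp only [Set.mem_preimage, hω]; exact hx
      rw [Set.inter_comm, measure_inter_conull hWc]
      simp only [iterN, Pi.one_apply, one_mul]
      exact (hqs x).symm
    · have hW1 : Plaw x ((fun ω : ℕ → S => ω 0) ⁻¹' D 0) = 0 := by
        have : Plaw x (((fun ω : ℕ → S => ω 0) ⁻¹' D 0)ᶜ) = 1 := by
          refine le_antisymm prob_le_one ?_
          rw [← (hlaw x).start]
          exact measure_mono fun ω (hω : ω 0 = x) => by
            simp only [Set.mem_compl_iff, Set.mem_preimage, hω]; exact hx
        have := (prob_compl_eq_zero_iff hW.compl).mpr this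
        rwa [compl_compl] at this
      rw [Set.indicator_of_notMem hx, zero_mul]
      exact le_antisymm (le_trans (measure_mono Set.inter_subset_left) hW1.le) (zero_le)
  | succ n ih =>
    intro D hD hDsub hDtail x
    haveI : IsProbabilityMeasure (P x) := IsMarkovKernel.isProbabilityMeasure x
    have anti : Antitone fun m => Plaw x (cyl D m) :=
      fun a b hab => measure_mono (cyl_antitone D hab)
    have hshift : (⨅ m, Plaw x (cyl D m)) = ⨅ m, Plaw x (cyl D (m + 1)) := by
      refine le_antisymm (le_iInf fun m => iInf_le _ (m + 1))
        (le_iInf fun m => (iInf_le _ m).trans (anti (Nat.le_succ m)))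
    have key : ∀ (m : ℕ) (y : S), Plaw y (cyl D (m + 1))
        = (D 0).indicator 1 y
            * ∫⁻ z, Plaw z (cyl (fun i => D (i + 1)) m) ∂(P y) := by
      intro m y
      rw [meq P hlaw D hD (m + 1) y]
      show Rfun P D (m + 1) _ y = _
      simp only [Rfun]
      congr 1
      exact lintegral_congr fun z =>
        (meq P hlaw _ (fun i => hD (i + 1)) m z).symm
    by_cases hx : x ∈ D 0
    · simp only [hshift]
      have : ∀ m, Plaw x (cyl D (m + 1))
          = ∫⁻ z, Plaw z (cyl (fun i => D (i + 1)) m) ∂(P x) := by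
        intro m; rw [key m x, Set.indicator_of_mem hx]; simp
      simp only [this]
      rw [Set.indicator_of_mem hx]
      simp only [Pi.one_apply, one_mul]
      have hmeasm : ∀ m, Measurable fun z => Plaw z (cyl (fun i => D (i + 1)) m) := by
        intro m
        have : (fun z => Plaw z (cyl (fun i => D (i + 1)) m))
            = Rfun P (fun i => D (i + 1)) m (Set.indicator (D (m + 1)) 1) := by
          funext z; exact meq P hlaw _ (fun i => hD (i + 1)) m z
        rw [this]
        exact Rfun_meas P m _ _ (fun i => hD (i + 1)) (measurable_one.indicator (hD (m + 1)))
      have hanti2 : Antitone fun m => fun z => Plaw z (cyl (fun i => D (i + 1)) m) :=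
        fun a b hab z => measure_mono (cyl_antitone _ hab)
      have hfin : (∫⁻ z, Plaw z (cyl (fun i => D (i + 1)) 0) ∂(P x)) ≠ ⊤ := by
        refine ne_top_of_le_ne_top ENNReal.one_ne_top ?_
        calc ∫⁻ z, Plaw z (cyl (fun i => D (i + 1)) 0) ∂(P x)
            ≤ ∫⁻ _, 1 ∂(P x) := lintegral_mono fun z => by
              haveI := (hlaw z).isProb; exact prob_le_one
          _ = 1 := by rw [lintegral_one, measure_univ]
      rw [← lintegral_iInf hmeasm hanti2 hfin]
      have hIH : ∀ z, (⨅ m, Plaw z (cyl (fun i => D (i + 1)) m))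
          = (D 1).indicator 1 z * iterN P qs (fun i => D (i + 2)) n z := by
        intro z
        exact ih (fun i => D (i + 1)) (fun i => hD (i + 1)) (fun i => hDsub (i + 1))
          (fun i hi => hDtail (i + 1) (by omega)) z
      rw [lintegral_congr hIH]
      rw [lintegral_congr fun z =>
        indicator_mul_eq (f := fun z => iterN P qs (fun i => D (i + 2)) n z) z,
        lintegral_indicator (hD 1)]
      rfl
    · rw [Set.indicator_of_notMem hx, zero_mul, hshift]
      have : ∀ m, Plaw x (cyl D (m + 1)) = 0 := by
        intro m; rw [key m x, Set.indicator_of_notMem hx, zero_mul]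
      simp [this]

end CondChain

namespace CondChain

set_option linter.unusedSectionVars false

variable {S : Type*} [MeasurableSpace S]
variable (P : ProbabilityTheory.Kernel S S) [IsMarkovKernel P]
variable {Plaw : S → MeasureTheory.Measure (ℕ → S)}

section QS

variable {h : S → ℝ} {s : ℝ}

lemma hSs_meas (hmeas : Measurable h) (s : ℝ) : MeasurableSet {y : S | h y ≤ s} := hmeas measurableSet_Iic

lemma qs_iInf (hlaw : ∀ x, IsMarkovChainLawAt P (Plaw x) x) (hmeas : Measurable h) (s : ℝ) (y : S) :
    Plaw y {ω : ℕ → S | ∀ i, h (ω i) ≤ s}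
      = ⨅ m, Plaw y (cyl (fun _ => {y : S | h y ≤ s}) m) := by
  rw [← measure_iInter_cyl P hlaw (fun _ => hSs_meas hmeas s) y, iInter_cyl]
  rfl

lemma qs_meas (hlaw : ∀ x, IsMarkovChainLawAt P (Plaw x) x) (hmeas : Measurable h) (s : ℝ) : Measurable (fun y => Plaw y {ω : ℕ → S | ∀ i, h (ω i) ≤ s}) := by
  have : (fun y => Plaw y {ω : ℕ → S | ∀ i, h (ω i) ≤ s})
      = fun y => ⨅ m, Rfun P (fun _ => {y : S | h y ≤ s}) m
          (Set.indicator {y : S | h y ≤ s} 1) y := by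
    funext y
    rw [qs_iInf P hlaw hmeas s]
    exact iInf_congr fun m => meq P hlaw _ (fun _ => hSs_meas hmeas s) m y
  rw [this]
  exact Measurable.iInf fun m => Rfun_meas P m _ _ (fun _ => hSs_meas hmeas s)
    (measurable_one.indicator (hSs_meas hmeas s))

lemma qs_rec (hlaw : ∀ x, IsMarkovChainLawAt P (Plaw x) x) (hmeas : Measurable h) (s : ℝ) (y : S) :
    Plaw y {ω : ℕ → S | ∀ i, h (ω i) ≤ s}
      = ({y : S | h y ≤ s}).indicator 1 y
          * ∫⁻ z in {y : S | h y ≤ s}, Plaw z {ω : ℕ → S | ∀ i, h (ω i) ≤ s} ∂(P y) := by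
  have := limA P hlaw {y : S | h y ≤ s}
    (fun z => Plaw z {ω : ℕ → S | ∀ i, h (ω i) ≤ s}) (fun z => rfl) 1
    (fun _ => {y : S | h y ≤ s}) (fun _ => hSs_meas hmeas s)
    (fun _ => subset_rfl) (fun _ _ => rfl) y
  rw [qs_iInf P hlaw hmeas s, this]
  rfl

/-- Doob maximal bound: `qs y ≥ 1 - h y / s` (trivial unless `0 < s`). -/
lemma qs_bound (hlaw : ∀ x, IsMarkovChainLawAt P (Plaw x) x) (hmeas : Measurable h) (hnonneg : ∀ y, 0 ≤ h y)
    (hharm : ∀ x, MeasureTheory.Integrable h (P x) ∧ h x = ∫ y, h y ∂(P x))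
    (hs' : 0 < s) (y : S) :
    ENNReal.ofReal (1 - h y / s) ≤ Plaw y {ω : ℕ → S | ∀ i, h (ω i) ≤ s} := by
  rw [qs_iInf P hlaw hmeas s]
  refine le_iInf fun m => ?_
  induction m generalizing y with
  | zero =>
    by_cases hy : h y ≤ s
    · haveI := (hlaw y).isProb
      have h1 : Plaw y (cyl (fun _ => {y : S | h y ≤ s}) 0) = 1 := by
        refine le_antisymm prob_le_one ?_
        rw [← (hlaw y).start]
        refine measure_mono fun ω (hω : ω 0 = y) i hi => ?_
        interval_cases i
        simpa [hω] using hy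
      rw [h1]
      exact ENNReal.ofReal_le_one.mpr (by linarith [div_nonneg (hnonneg y) hs'.le])
    · push_neg at hy
      have : (1 : ℝ) - h y / s ≤ 0 := by
        rw [sub_nonpos, le_div_iff₀ hs']
        linarith
      simp [ENNReal.ofReal_eq_zero.mpr this]
  | succ m ih =>
    by_cases hy : h y ≤ s
    · have key : Plaw y (cyl (fun _ => {y : S | h y ≤ s}) (m + 1))
          = ∫⁻ z, Plaw z (cyl (fun _ => {y : S | h y ≤ s}) m) ∂(P y) := by
        rw [meq P hlaw _ (fun _ => hSs_meas hmeas s) (m + 1) y]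
        show Rfun P _ (m + 1) _ y = _
        simp only [Rfun]
        rw [Set.indicator_of_mem (show y ∈ {y : S | h y ≤ s} from hy), Pi.one_apply, one_mul]
        exact lintegral_congr fun z =>
          (meq P hlaw _ (fun _ => hSs_meas hmeas s) m z).symm
      rw [key]
      haveI : IsProbabilityMeasure (P y) := IsMarkovKernel.isProbabilityMeasure y
      have hint : Integrable (fun z => 1 - h z / s) (P y) :=
        (integrable_const 1).sub ((hharm y).1.div_const s)
      have hint' : Integrable (fun z => max (1 - h z / s) 0) (P y) := hint.pos_part
      have heq : ∫ z, (1 - h z / s) ∂(P y) = 1 - h y / s := by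
        rw [integral_sub (integrable_const 1) ((hharm y).1.div_const s),
          integral_const, integral_div, ← (hharm y).2]
        simp
      calc ENNReal.ofReal (1 - h y / s)
          = ENNReal.ofReal (∫ z, (1 - h z / s) ∂(P y)) := by rw [heq]
        _ ≤ ENNReal.ofReal (∫ z, max (1 - h z / s) 0 ∂(P y)) :=
            ENNReal.ofReal_le_ofReal
              (integral_mono hint hint' fun z => le_max_left _ _)
        _ = ∫⁻ z, ENNReal.ofReal (max (1 - h z / s) 0) ∂(P y) :=
            ofReal_integral_eq_lintegral_ofReal hint'
              (ae_of_all _ fun z => le_max_right _ _)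
        _ = ∫⁻ z, ENNReal.ofReal (1 - h z / s) ∂(P y) := by
            refine lintegral_congr fun z => ?_
            rcases le_total (1 - h z / s) 0 with hz | hz
            · rw [max_eq_right hz, ENNReal.ofReal_eq_zero.mpr hz]; simp
            · rw [max_eq_left hz]
        _ ≤ ∫⁻ z, Plaw z (cyl (fun _ => {y : S | h y ≤ s}) m) ∂(P y) :=
            lintegral_mono fun z => ih z
    · push_neg at hy
      have : (1 : ℝ) - h y / s ≤ 0 := by
        rw [sub_nonpos, le_div_iff₀ hs']
        linarith
      simp [ENNReal.ofReal_eq_zero.mpr this]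

end QS

end CondChain

namespace CondChain

variable {S : Type*} [MeasurableSpace S]
variable (P : ProbabilityTheory.Kernel S S) [IsMarkovKernel P]
variable {Plaw : S → MeasureTheory.Measure (ℕ → S)}
variable {h : S → ℝ} {s : ℝ}

/-- Lemma 4: positivity of `qs` on `{h ≤ s}`. -/
lemma qs_pos (hlaw : ∀ x, IsMarkovChainLawAt P (Plaw x) x) (hmeas : Measurable h)
    (hnonneg : ∀ y, 0 ≤ h y)
    (hharm : ∀ x, MeasureTheory.Integrable h (P x) ∧ h x = ∫ y, h y ∂(P x))
    (hs : 0 ≤ s) (x : S) (hx : h x ≤ s) :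
    Plaw x {ω : ℕ → S | ∀ i, h (ω i) ≤ s} ≠ 0 := by
  intro hcontra
  set Ss := {y : S | h y ≤ s} with hSsdef
  set qs := fun y => Plaw y {ω : ℕ → S | ∀ i, h (ω i) ≤ s} with hqsdef
  have hSm : MeasurableSet Ss := hSs_meas hmeas s
  have hqsm : Measurable qs := qs_meas P hlaw hmeas s
  set Z := {z : S | h z ≤ s ∧ qs z = 0} with hZdef
  have hZm : MeasurableSet Z := by
    have : Z = Ss ∩ qs ⁻¹' {0} := by
      ext z; simp [hZdef, hSsdef, Set.mem_setOf_eq]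
    rw [this]
    exact hSm.inter (hqsm (measurableSet_singleton 0))
  have hzstep : ∀ z ∈ Z, P z Z = 1 := by
    rintro z ⟨hz1, hz2⟩
    haveI : IsProbabilityMeasure (P z) := IsMarkovKernel.isProbabilityMeasure z
    have hint0 : ∫⁻ w in Ss, qs w ∂(P z) = 0 := by
      have hrec := qs_rec P hlaw hmeas s z
      rw [Set.indicator_of_mem (show z ∈ Ss from hz1), Pi.one_apply, one_mul] at hrec
      rw [← hrec]
      exact hz2
    have A1 : ∀ᵐ w ∂(P z), w ∈ Ss → qs w = 0 := by
      have A1' := (lintegral_eq_zero_iff hqsm).mp hint0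
      refine (ae_restrict_iff' hSm).mp ?_
      filter_upwards [A1'] with w hw using hw
    have A2 : ∀ᵐ w ∂(P z), h w ≤ s := by
      rcases eq_or_lt_of_le hs with hs0 | hs'
      · have hz0 : h z = 0 := le_antisymm (hs0 ▸ hz1) (hnonneg z)
        have hint : ∫ w, h w ∂(P z) = 0 := by rw [← (hharm z).2, hz0]
        have hae := (integral_eq_zero_iff_of_nonneg_ae (ae_of_all _ hnonneg)
          (hharm z).1).mp hint
        filter_upwards [hae] with w hw
        have : h w = 0 := hw
        linarith
      · have hzs : h z = s := by
          refine le_antisymm hz1 ?_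
          have hb := qs_bound P hlaw hmeas hnonneg hharm hs' z
          rw [show Plaw z {ω : ℕ → S | ∀ i, h (ω i) ≤ s} = qs z from rfl, hz2] at hb
          have h0 := le_antisymm hb (zero_le)
          rw [ENNReal.ofReal_eq_zero, sub_nonpos, le_div_iff₀ hs'] at h0
          linarith
        have hint : ∫ w, (h w - s) ∂(P z) = 0 := by
          rw [integral_sub (hharm z).1 (integrable_const s), ← (hharm z).2,
            integral_const]
          simp [hzs]
        have hg0 : 0 ≤ᵐ[P z] fun w => h w - s := by
          filter_upwards [A1] with w hw
          by_cases hws : h w ≤ s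
          · have hqw : qs w = 0 := hw hws
            have hb := qs_bound P hlaw hmeas hnonneg hharm hs' w
            rw [show Plaw w {ω : ℕ → S | ∀ i, h (ω i) ≤ s} = qs w from rfl, hqw] at hb
            have h0 := le_antisymm hb (zero_le)
            rw [ENNReal.ofReal_eq_zero, sub_nonpos, le_div_iff₀ hs'] at h0
            simp only [Pi.zero_apply]
            linarith
          · push_neg at hws
            simp only [Pi.zero_apply]
            linarith
        have hae := (integral_eq_zero_iff_of_nonneg_ae hg0
          ((hharm z).1.sub (integrable_const s))).mp hint
        filter_upwards [hae] with w hw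
        have : h w - s = 0 := hw
        linarith
    have AZ : ∀ᵐ w ∂(P z), w ∈ Z := by
      filter_upwards [A1, A2] with w h1 h2
      exact ⟨h2, h1 h2⟩
    refine (prob_compl_eq_zero_iff hZm).mp ?_
    have : P z {w | ¬ w ∈ Z} = 0 := AZ
    exact this
  have hZ2 : ∀ m, ∀ z ∈ Z, Rfun P (fun _ => Z) m (Set.indicator Z 1) z = 1 := by
    intro m
    induction m with
    | zero =>
      intro z hz
      show Set.indicator Z 1 z = 1
      rw [Set.indicator_of_mem hz, Pi.one_apply]
    | succ m ih =>
      intro z hz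
      haveI : IsProbabilityMeasure (P z) := IsMarkovKernel.isProbabilityMeasure z
      have hae : ∀ᵐ w ∂(P z), w ∈ Z := by
        have h1 : P z Zᶜ = 0 := (prob_compl_eq_zero_iff hZm).mpr (hzstep z hz)
        refine ae_iff.mpr ?_
        exact h1
      show Z.indicator 1 z * ∫⁻ w, Rfun P (fun _ => Z) m (Set.indicator Z 1) w ∂(P z) = 1
      rw [Set.indicator_of_mem hz, Pi.one_apply, one_mul]
      have hcongr : (fun w => Rfun P (fun _ => Z) m (Set.indicator Z 1) w)
          =ᵐ[P z] fun _ => 1 := by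
        filter_upwards [hae] with w hw using ih w hw
      rw [lintegral_congr_ae hcongr, lintegral_one, measure_univ]
  have hone : (1 : ℝ≥0∞) ≤ qs x := by
    rw [hqsdef]
    simp only
    rw [qs_iInf P hlaw hmeas s x]
    refine le_iInf fun m => ?_
    have h1 : Plaw x (cyl (fun _ => Z) m) = 1 := by
      rw [meq P hlaw _ (fun _ => hZm) m x]
      exact hZ2 m x ⟨hx, hcontra⟩
    rw [← h1]
    exact measure_mono fun ω hω i hi => (hω i hi).1
  rw [show qs x = 0 from hcontra] at hone
  simp at hone

/-- Telescoping of the Doob transform iterated integral. -/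
lemma teles (hlaw : ∀ x, IsMarkovChainLawAt P (Plaw x) x) (hmeas : Measurable h)
    (hnonneg : ∀ y, 0 ≤ h y)
    (hharm : ∀ x, MeasureTheory.Integrable h (P x) ∧ h x = ∫ y, h y ∂(P x))
    (hs : 0 ≤ s) (B : ℕ → Set S) (hB : ∀ i, MeasurableSet (B i)) :
    ∀ (n k : ℕ) (x : S), Plaw x {ω : ℕ → S | ∀ i, h (ω i) ≤ s} ≠ 0 →
      iterQ P (fun y => Plaw y {ω : ℕ → S | ∀ i, h (ω i) ≤ s}) B k n x
        = (Plaw x {ω : ℕ → S | ∀ i, h (ω i) ≤ s})⁻¹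
            * iterN P (fun y => Plaw y {ω : ℕ → S | ∀ i, h (ω i) ≤ s})
                (fun i => B (k + i) ∩ {y : S | h y ≤ s}) n x := by
  set Ss := {y : S | h y ≤ s} with hSsdef
  set qs := fun y => Plaw y {ω : ℕ → S | ∀ i, h (ω i) ≤ s} with hqsdef
  have hSm : MeasurableSet Ss := hSs_meas hmeas s
  have hqtop : ∀ y, qs y ≠ ⊤ := fun y => by
    haveI := (hlaw y).isProb
    exact ne_top_of_le_ne_top ENNReal.one_ne_top prob_le_one
  intro n
  induction n with
  | zero =>
    intro k x hx0
    show (1 : ℝ≥0∞) = (qs x)⁻¹ * qs x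
    rw [ENNReal.inv_mul_cancel hx0 (hqtop x)]
  | succ n ih =>
    intro k x hx0
    show (∫⁻ y in B k, (qs y / qs x) * iterQ P qs B (k + 1) n y ∂(P x)) = _
    have hpt : ∀ y, (qs y / qs x) * iterQ P qs B (k + 1) n y
        = Ss.indicator (fun y => (qs x)⁻¹
            * iterN P qs (fun i => B (k + 1 + i) ∩ Ss) n y) y := by
      intro y
      by_cases hy : y ∈ Ss
      · rw [Set.indicator_of_mem hy]
        have hy0 : qs y ≠ 0 := qs_pos P hlaw hmeas hnonneg hharm hs y hy
        rw [ih (k + 1) y hy0]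
        have hPy : (Plaw y {ω : ℕ → S | ∀ i, h (ω i) ≤ s})⁻¹ = (qs y)⁻¹ := rfl
        rw [hPy, div_eq_mul_inv, mul_comm (qs y) (qs x)⁻¹, mul_assoc,
          ← mul_assoc (qs y), ENNReal.mul_inv_cancel hy0 (hqtop y), one_mul]
      · rw [Set.indicator_of_notMem hy]
        have hy0 : qs y = 0 := by
          have hrec := qs_rec P hlaw hmeas s y
          rw [Set.indicator_of_notMem hy, zero_mul] at hrec
          exact hrec
        rw [hy0, ENNReal.zero_div, zero_mul]
    rw [lintegral_congr hpt, lintegral_indicator hSm, Measure.restrict_restrict hSm,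
      lintegral_const_mul' _ _ (ENNReal.inv_ne_top.mpr hx0)]
    congr 1
    show _ = iterN P qs (fun i => B (k + i) ∩ Ss) (n + 1) x
    simp only [iterN]
    rw [Set.inter_comm Ss (B k)]
    have hk0 : B (k + 0) ∩ Ss = B k ∩ Ss := rfl
    rw [hk0]
    exact lintegral_congr fun y => iterN_congr P qs n _ _ y fun i _ => by
      rw [show k + (i + 1) = k + 1 + i by omega]

end CondChain


open CondChain in
/-- Lemma 5: under `P_x`, the chain conditioned on `{h(X_i) ≤ s ∀ i}` is a Markov chain with
kernel `Q_s(x,dy) = q_s(y) P(x,dy)/q_s(x)`: for all `n` and measurable `B_1, …, B_n`,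
`P_x(X_1 ∈ B_1, …, X_n ∈ B_n | h(X_i) ≤ s ∀ i) = Q_s(x,B_1 dx_1) ⋯ Q_s(x_{n-1}, dx_n)`. -/
theorem conditioned_chain_markov {S : Type*} [MeasurableSpace S]
    (P : ProbabilityTheory.Kernel S S) [IsMarkovKernel P]
    (Plaw : S → MeasureTheory.Measure (ℕ → S))
    (hlaw : ∀ x, IsMarkovChainLawAt P (Plaw x) x)
    (h : S → ℝ) (hmeas : Measurable h) (hnonneg : ∀ y, 0 ≤ h y)
    (hharm : Harmonic P h) (s : ℝ) (hs : 0 ≤ s)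
    (x : S) (hxs : h x ≤ s)
    (n : ℕ) (B : ℕ → Set S) (hB : ∀ i, MeasurableSet (B i)) :
    Plaw x ({ω | ∀ i, 1 ≤ i → i ≤ n → ω i ∈ B i} ∩ {ω | ∀ i, h (ω i) ≤ s})
        / Plaw x {ω | ∀ i, h (ω i) ≤ s}
      = iterQ P (fun y => Plaw y {ω | ∀ i, h (ω i) ≤ s}) B 1 n x := by
  set Ss := {y : S | h y ≤ s} with hSsdef
  set qs := fun y => Plaw y {ω : ℕ → S | ∀ i, h (ω i) ≤ s} with hqsdef
  have hSm : MeasurableSet Ss := hSs_meas hmeas s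
  have hq0 : qs x ≠ 0 := qs_pos P hlaw hmeas hnonneg hharm hs x hxs
  classical
  set D : ℕ → Set S := fun i => if i = 0 then Ss else if i ≤ n then B i ∩ Ss else Ss
    with hDdef
  have hD : ∀ i, MeasurableSet (D i) := by
    intro i
    simp only [hDdef]
    split_ifs
    · exact hSm
    · exact (hB i).inter hSm
    · exact hSm
  have hDsub : ∀ i, D i ⊆ Ss := by
    intro i
    simp only [hDdef]
    split_ifs
    · exact subset_rfl
    · exact Set.inter_subset_right
    · exact subset_rfl
  have hDtail : ∀ i, n < i → D i = Ss := by
    intro i hi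
    simp only [hDdef]
    rw [if_neg (by omega), if_neg (by omega)]
  have hset : {ω : ℕ → S | ∀ i, 1 ≤ i → i ≤ n → ω i ∈ B i}
        ∩ {ω : ℕ → S | ∀ i, h (ω i) ≤ s} = ⋂ m, cyl D m := by
    rw [iInter_cyl]
    ext ω
    simp only [Set.mem_inter_iff, Set.mem_setOf_eq]
    constructor
    · rintro ⟨hA, hC⟩ i
      simp only [hDdef]
      split_ifs with h1 h2
      · exact hC i
      · exact ⟨hA i (by omega) h2, hC i⟩
      · exact hC i
    · intro H
      constructor
      · intro i h1 h2
        have := H i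
        simp only [hDdef, if_neg (by omega : ¬ i = 0), if_pos h2] at this
        exact this.1
      · intro i
        have := H i
        simp only [hDdef] at this
        split_ifs at this with h1 h2
        · exact this
        · exact this.2
        · exact this
  rw [hset, measure_iInter_cyl P hlaw hD x,
    limA P hlaw Ss qs (fun z => rfl) n D hD hDsub hDtail x]
  have hD0 : D 0 = Ss := by simp [hDdef]
  rw [hD0, Set.indicator_of_mem (show x ∈ Ss from hxs), Pi.one_apply, one_mul]
  rw [teles P hlaw hmeas hnonneg hharm hs B hB n 1 x hq0]
  rw [ENNReal.div_eq_inv_mul]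
  congr 1
  refine iterN_congr P qs n _ _ x fun i hi => ?_
  simp only [hDdef]
  rw [if_neg (by omega : ¬ i + 1 = 0), if_pos (by omega : i + 1 ≤ n),
    show 1 + i = i + 1 by omega]
end

section
/- Let h be harmonic for P with 0 < h(o) ≤ h(x). Let U be uniform on (0, h(o)^{-1}), independent of the chain under P_x^h, and σ = σ_{h(x)} = inf{i : h(X_i) > h(x)}. Then P_x^h( h(X_σ)^{-1} 1_{σ < ∞} < U ≤ h(x)^{-1} ) = (h(o)/h(x)) · q_{h(x)}(x), where q_{h(x)}(x) = P_x(h(X_i) ≤ h(x) ∀ i). -/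
open MeasureTheory ProbabilityTheory ENNReal Filter

/-- `Plawh` is the `h`-transformed family of laws of the chain with laws `Plaw`:
for `h x > 0`, `Plawh x` is a probability measure starting at `x` and
`E_x^h φ(X_1, …, X_n) = h(x)⁻¹ E_x [φ(X_1, …, X_n) h(X_n)]`. -/
structure IsHTransformLaw {S : Type*} [MeasurableSpace S] (h : S → ℝ)
    (Plaw Plawh : S → MeasureTheory.Measure (ℕ → S)) : Prop where
  isProb : ∀ x, 0 < h x → IsProbabilityMeasure (Plawh x)
  start : ∀ x, 0 < h x → Plawh x {ω | ω 0 = x} = 1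
  transform : ∀ x, 0 < h x → ∀ (n : ℕ) (φ : (Fin n → S) → ℝ≥0∞), Measurable φ →
    ∫⁻ ω, φ (fun i => ω (i + 1)) ∂(Plawh x)
      = (ENNReal.ofReal (h x))⁻¹
          * ∫⁻ ω, φ (fun i => ω (i + 1)) * ENNReal.ofReal (h (ω n)) ∂(Plaw x)

open Set

private lemma vol_aux {a c b : ℝ} (ha : 0 ≤ a) (hcb : c ≤ b) :
    MeasureTheory.volume (Set.Ioc a c ∩ Set.Ioo 0 b) = ENNReal.ofReal (c - a) := by
  apply le_antisymm
  · calc volume (Ioc a c ∩ Ioo 0 b) ≤ volume (Ioc a c) := measure_mono Set.inter_subset_left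
      _ = ENNReal.ofReal (c - a) := Real.volume_Ioc
  · calc ENNReal.ofReal (c - a) = volume (Ioo a c) := (Real.volume_Ioo).symm
      _ ≤ volume (Ioc a c ∩ Ioo 0 b) := measure_mono
          (fun u hu => ⟨⟨hu.1, hu.2.le⟩, lt_of_le_of_lt ha hu.1, lt_of_lt_of_le hu.2 hcb⟩)

/-- Lemma 6, second identity: for harmonic `h` with `0 < h(o) ≤ h(x)`, `U` uniform on
`(0, h(o)⁻¹)` independent of the chain under `P_x^h`, and `σ = inf{i : h(X_i) > h(x)}`,
`P_x^h( h(X_σ)⁻¹ 1_{σ < ∞} < U ≤ h(x)⁻¹ ) = (h(o)/h(x)) · q_{h(x)}(x)`,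
where `q_{h(x)}(x) = P_x(h(X_i) ≤ h(x) ∀ i)`. -/
theorem uniform_between_identity {S : Type*} [MeasurableSpace S]
    (P : ProbabilityTheory.Kernel S S) [IsMarkovKernel P]
    (Plaw Plawh : S → MeasureTheory.Measure (ℕ → S))
    (hlaw : ∀ x, IsMarkovChainLawAt P (Plaw x) x)
    (h : S → ℝ) (hmeas : Measurable h) (hnonneg : ∀ y, 0 ≤ h y)
    (hharm : Harmonic P h)
    (htr : IsHTransformLaw h Plaw Plawh)
    (o x : S) (ho : 0 < h o) (hox : h o ≤ h x) :
    ((Plawh x).prod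
        (ENNReal.ofReal (h o) • MeasureTheory.volume.restrict (Set.Ioo (0 : ℝ) (h o)⁻¹)))
      {p : (ℕ → S) × ℝ |
        Set.indicator {ω : ℕ → S | ∃ i, h x < h (ω i)}
            (fun ω => (h (ω (sInf {i | h x < h (ω i)})))⁻¹) p.1 < p.2
          ∧ p.2 ≤ (h x)⁻¹}
      = ENNReal.ofReal (h o / h x) * Plaw x {ω | ∀ i, h (ω i) ≤ h x} := by
  have hx : 0 < h x := lt_of_lt_of_le ho hox
  set μ := Plawh x with hμdef
  haveI : IsProbabilityMeasure μ := htr.isProb x hx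
  haveI : IsProbabilityMeasure (Plaw x) := (hlaw x).isProb
  set E : Set (ℕ → S) := {ω | ∃ i, h x < h (ω i)} with hEdef
  set σf : (ℕ → S) → ℕ := fun ω => sInf {i | h x < h (ω i)} with hσdef
  set f : (ℕ → S) → ℝ := E.indicator (fun ω => (h (ω (σf ω)))⁻¹) with hfdef
  -- coordinate sets
  have hcoordmeas : ∀ n : ℕ, MeasurableSet {ω : ℕ → S | h x < h (ω n)} := fun n =>
    (hmeas.comp (measurable_pi_apply n)) measurableSet_Ioi
  have hcoordmeas' : ∀ n : ℕ, MeasurableSet {ω : ℕ → S | h (ω n) ≤ h x} := fun n =>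
    (hmeas.comp (measurable_pi_apply n)) measurableSet_Iic
  have hEmeas : MeasurableSet E := by
    have : E = ⋃ i, {ω : ℕ → S | h x < h (ω i)} := by ext ω; simp [hEdef]
    rw [this]; exact MeasurableSet.iUnion fun i => hcoordmeas i
  set En : ℕ → Set (ℕ → S) :=
    fun n => {ω | h x < h (ω n) ∧ ∀ m, m < n → h (ω m) ≤ h x} with hEndef
  have hEnmeas : ∀ n, MeasurableSet (En n) := by
    intro n
    have : En n = {ω : ℕ → S | h x < h (ω n)} ∩ ⋂ m ∈ Finset.range n, {ω | h (ω m) ≤ h x} := by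
      ext ω; simp [hEndef]
    rw [this]
    exact (hcoordmeas n).inter (MeasurableSet.biInter (Set.to_countable _)
      fun m _ => hcoordmeas' m)
  have hEn_sub_E : ∀ n, En n ⊆ E := fun n ω hω => ⟨n, hω.1⟩
  have hσ_En : ∀ n (ω : ℕ → S), ω ∈ En n → σf ω = n := by
    intro n ω hω
    have h1 : σf ω ≤ n := Nat.sInf_le hω.1
    rcases lt_or_eq_of_le h1 with h2 | h2
    · exfalso
      have hne : {i | h x < h (ω i)}.Nonempty := ⟨n, hω.1⟩
      have := Nat.sInf_mem hne
      exact absurd (hω.2 _ h2) (not_le.mpr this)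
    · exact h2
  have hmem_En : ∀ ω, ω ∈ E → ω ∈ En (σf ω) := by
    intro ω hω
    refine ⟨Nat.sInf_mem hω, fun m hm => ?_⟩
    by_contra hc
    have hle : σf ω ≤ m := Nat.sInf_le (show h x < h (ω m) from not_le.mp hc)
    exact absurd hle (not_le.mpr hm)
  -- measurability of f
  have hσmeas : Measurable σf := by
    apply measurable_to_countable'
    intro n
    have : σf ⁻¹' {n} = En n ∪ (if n = 0 then Eᶜ else ∅) := by
      ext ω
      simp only [mem_preimage, mem_singleton_iff, mem_union]
      constructor
      · intro hσ
        by_cases hω : ω ∈ E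
        · exact Or.inl (hσ ▸ hmem_En ω hω)
        · have : {i | h x < h (ω i)} = ∅ := by
            ext i; simp only [mem_setOf_eq, mem_empty_iff_false, iff_false]
            exact fun hi => hω ⟨i, hi⟩
          have h0 : σf ω = 0 := by rw [hσdef]; simp [this]
          right; simp [h0 ▸ hσ, hω]
      · rintro (hω | hω)
        · exact hσ_En _ _ hω
        · by_cases h0 : n = 0
          · simp only [h0, if_true] at hω
            have : {i | h x < h (ω i)} = ∅ := by
              ext i; simp only [mem_setOf_eq, mem_empty_iff_false, iff_false]
              exact fun hi => hω ⟨i, hi⟩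
            rw [h0, hσdef]; simp [this]
          · simp [h0] at hω
    rw [this]
    refine (hEnmeas n).union ?_
    by_cases h0 : n = 0 <;> simp [h0, hEmeas.compl]
  have hXσ : Measurable (fun ω : ℕ → S => ω (σf ω)) := by
    intro B hB
    have : (fun ω : ℕ → S => ω (σf ω)) ⁻¹' B
        = ⋃ n, (σf ⁻¹' {n}) ∩ ((fun ω : ℕ → S => ω n) ⁻¹' B) := by
      ext ω
      simp only [mem_iUnion, mem_inter_iff, mem_preimage, mem_singleton_iff]
      constructor
      · intro hmem; exact ⟨σf ω, rfl, hmem⟩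
      · rintro ⟨n, hn, hmem⟩; rw [hn]; exact hmem
    rw [this]
    exact MeasurableSet.iUnion fun n =>
      (hσmeas (measurableSet_singleton n)).inter (measurable_pi_apply n hB)
  have hfmeas : Measurable f := ((hmeas.comp hXσ).inv).indicator hEmeas
  -- bounds on f
  have hf0 : ∀ ω, 0 ≤ f ω :=
    fun ω => Set.indicator_nonneg (fun ω' _ => inv_nonneg.2 (hnonneg _)) ω
  have hfc : ∀ ω, f ω ≤ (h x)⁻¹ := by
    intro ω
    by_cases hω : ω ∈ E
    · rw [hfdef]
      rw [Set.indicator_of_mem hω]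
      have h1 : h x < h (ω (σf ω)) := (hmem_En ω hω).1
      exact inv_anti₀ hx h1.le
    · rw [hfdef, Set.indicator_of_notMem hω]
      positivity
  -- the set is measurable
  have hAmeas : MeasurableSet {p : (ℕ → S) × ℝ | f p.1 < p.2 ∧ p.2 ≤ (h x)⁻¹} := by
    refine MeasurableSet.inter ?_ ?_
    · exact measurableSet_lt (hfmeas.comp measurable_fst) measurable_snd
    · exact measurableSet_le measurable_snd measurable_const
  -- Fubini
  rw [show {p : (ℕ → S) × ℝ |
        Set.indicator {ω : ℕ → S | ∃ i, h x < h (ω i)}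
            (fun ω => (h (ω (sInf {i | h x < h (ω i)})))⁻¹) p.1 < p.2
          ∧ p.2 ≤ (h x)⁻¹} = {p : (ℕ → S) × ℝ | f p.1 < p.2 ∧ p.2 ≤ (h x)⁻¹} from rfl]
  rw [Measure.prod_apply hAmeas]
  have hsection : ∀ ω : ℕ → S,
      (ENNReal.ofReal (h o) • MeasureTheory.volume.restrict (Set.Ioo (0 : ℝ) (h o)⁻¹))
        (Prod.mk ω ⁻¹' {p : (ℕ → S) × ℝ | f p.1 < p.2 ∧ p.2 ≤ (h x)⁻¹})
      = ENNReal.ofReal (h o) * ENNReal.ofReal ((h x)⁻¹ - f ω) := by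
    intro ω
    have hset : Prod.mk ω ⁻¹' {p : (ℕ → S) × ℝ | f p.1 < p.2 ∧ p.2 ≤ (h x)⁻¹}
        = Set.Ioc (f ω) (h x)⁻¹ := rfl
    rw [hset, Measure.smul_apply, Measure.restrict_apply measurableSet_Ioc,
      vol_aux (hf0 ω) (inv_anti₀ ho hox)]
    rfl
  simp only [hsection]
  -- split the integral
  have hint : ∫⁻ ω, ENNReal.ofReal (h o) * ENNReal.ofReal ((h x)⁻¹ - f ω) ∂μ
      = ENNReal.ofReal (h o) *
        (ENNReal.ofReal ((h x)⁻¹) - ∫⁻ ω, ENNReal.ofReal (f ω) ∂μ) := by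
    rw [lintegral_const_mul (f := fun ω => ENNReal.ofReal ((h x)⁻¹ - f ω)) _
      (measurable_const.sub hfmeas).ennreal_ofReal]
    congr 1
    have heq : ∀ ω, ENNReal.ofReal ((h x)⁻¹ - f ω)
        = ENNReal.ofReal ((h x)⁻¹) - ENNReal.ofReal (f ω) :=
      fun ω => ENNReal.ofReal_sub _ (hf0 ω)
    have hfin : ∫⁻ ω, ENNReal.ofReal (f ω) ∂μ ≠ ⊤ := by
      refine ne_of_lt (lt_of_le_of_lt
        (lintegral_mono fun ω => ENNReal.ofReal_le_ofReal (hfc ω)) ?_)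
      rw [lintegral_const, measure_univ, mul_one]; exact ENNReal.ofReal_lt_top
    have hle : (fun ω => ENNReal.ofReal (f ω))
        ≤ᵐ[μ] fun _ => ENNReal.ofReal ((h x)⁻¹) :=
      Filter.Eventually.of_forall fun ω => ENNReal.ofReal_le_ofReal (hfc ω)
    simp only [heq]
    rw [lintegral_sub hfmeas.ennreal_ofReal hfin hle, lintegral_const, measure_univ, mul_one]
  rw [hint]
  -- the key integral identity
  -- the null starting event
  have hnull : ∀ (ν : Measure (ℕ → S)), IsProbabilityMeasure ν → ν {ω | ω 0 = x} = 1 →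
      ν {ω : ℕ → S | h x < h (ω 0)} = 0 := by
    intro ν hp hstart
    have hsub : {ω : ℕ → S | ω 0 = x} ⊆ {ω : ℕ → S | h x < h (ω 0)}ᶜ := by
      intro ω hω
      simp only [mem_compl_iff, mem_setOf_eq, not_lt]
      rw [show ω 0 = x from hω]
    have h1 : (1:ℝ≥0∞) ≤ ν ({ω : ℕ → S | h x < h (ω 0)}ᶜ) := hstart ▸ measure_mono hsub
    by_contra hne
    have h2 := measure_compl (hcoordmeas 0) (measure_ne_top ν _)
    rw [measure_univ] at h2
    have h3 : ν ({ω : ℕ → S | h x < h (ω 0)}ᶜ) < 1 :=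
      h2 ▸ ENNReal.sub_lt_self ENNReal.one_ne_top one_ne_zero hne
    exact absurd h1 (not_le.mpr h3)
  have hμN : μ {ω : ℕ → S | h x < h (ω 0)} = 0 := hnull μ inferInstance (htr.start x hx)
  have hPN : Plaw x {ω : ℕ → S | h x < h (ω 0)} = 0 := hnull (Plaw x) inferInstance (hlaw x).start
  have key : ∫⁻ ω, ENNReal.ofReal (f ω) ∂μ = ENNReal.ofReal ((h x)⁻¹) * Plaw x E := by
    -- pointwise decomposition
    have hptwise : ∀ ω, ENNReal.ofReal (f ω)
        = ∑' n, (En n).indicator (fun ω' => ENNReal.ofReal ((h (ω' n))⁻¹)) ω := by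
      intro ω
      by_cases hω : ω ∈ E
      · rw [tsum_eq_single (σf ω) (fun n hn => Set.indicator_of_notMem
          (fun hc => hn (hσ_En n ω hc).symm) _)]
        rw [Set.indicator_of_mem (hmem_En ω hω), hfdef, Set.indicator_of_mem hω]
      · have h0 : f ω = 0 := by rw [hfdef, Set.indicator_of_notMem hω]
        have hz : ∀ n, (En n).indicator (fun ω' => ENNReal.ofReal ((h (ω' n))⁻¹)) ω = 0 :=
          fun n => Set.indicator_of_notMem (fun hc => hω (hEn_sub_E n hc)) _
        simp [h0, hz]
    have htermmeas : ∀ n, Measurable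
        ((En n).indicator (fun ω' : ℕ → S => ENNReal.ofReal ((h (ω' n))⁻¹))) :=
      fun n => (((hmeas.comp (measurable_pi_apply n)).inv).ennreal_ofReal).indicator (hEnmeas n)
    simp only [hptwise]
    rw [lintegral_tsum (fun n => (htermmeas n).aemeasurable)]
    -- per-term identity
    have hterm : ∀ n, ∫⁻ ω, (En n).indicator (fun ω' => ENNReal.ofReal ((h (ω' n))⁻¹)) ω ∂μ
        = ENNReal.ofReal ((h x)⁻¹) * Plaw x (En n) := by
      intro n
      match n with
      | 0 =>
        have hsub0 : En 0 ⊆ {ω : ℕ → S | h x < h (ω 0)} := fun ω hω => hω.1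
        have hμ0 : μ (En 0) = 0 := measure_mono_null hsub0 hμN
        have hP0 : Plaw x (En 0) = 0 := measure_mono_null hsub0 hPN
        rw [lintegral_indicator (hEnmeas 0), setLIntegral_measure_zero _ _ hμ0, hP0, mul_zero]
      | (k+1) =>
        set E' : Set (ℕ → S) :=
          {ω | h x < h (ω (k+1)) ∧ ∀ m, m < k → h (ω (m+1)) ≤ h x} with hE'def
        have hE'meas : MeasurableSet E' := by
          have : E' = {ω : ℕ → S | h x < h (ω (k+1))}
              ∩ ⋂ m ∈ Finset.range k, {ω : ℕ → S | h (ω (m+1)) ≤ h x} := by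
            ext ω; simp [hE'def]
          rw [this]
          exact (hcoordmeas (k+1)).inter (MeasurableSet.biInter (Set.to_countable _)
            fun m _ => hcoordmeas' (m+1))
        have hE'eq : En (k+1) = E' ∩ {ω : ℕ → S | h x < h (ω 0)}ᶜ := by
          ext ω
          simp only [hEndef, hE'def, mem_inter_iff, mem_compl_iff, mem_setOf_eq, not_lt]
          constructor
          · rintro ⟨h1, h2⟩
            exact ⟨⟨h1, fun m hm => h2 (m+1) (by omega)⟩, h2 0 (by omega)⟩
          · rintro ⟨⟨h1, h2⟩, h3⟩
            refine ⟨h1, fun m hm => ?_⟩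
            match m with
            | 0 => exact h3
            | (j+1) => exact h2 j (by omega)
        -- a.e. equality of indicators under μ
        have hae : (En (k+1)).indicator (fun ω' => ENNReal.ofReal ((h (ω' (k+1)))⁻¹))
            =ᵐ[μ] E'.indicator (fun ω' => ENNReal.ofReal ((h (ω' (k+1)))⁻¹)) := by
          have hmem : {ω : ℕ → S | h x < h (ω 0)}ᶜ ∈ ae μ := by
            rw [mem_ae_iff, compl_compl]; exact hμN
          filter_upwards [hmem] with ω hω
          by_cases hω' : ω ∈ E'
          · rw [Set.indicator_of_mem hω', Set.indicator_of_mem (by rw [hE'eq]; exact ⟨hω', hω⟩)]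
          · rw [Set.indicator_of_notMem hω',
              Set.indicator_of_notMem (fun hc => hω' (hE'eq ▸ hc).1)]
        rw [lintegral_congr_ae hae]
        -- the h-transform functional
        set B : Set (Fin (k+1) → S) :=
          {w | h x < h (w (Fin.last k)) ∧ ∀ j : Fin (k+1), (j:ℕ) < k → h (w j) ≤ h x} with hBdef
        set φ : (Fin (k+1) → S) → ℝ≥0∞ :=
          B.indicator (fun w => ENNReal.ofReal ((h (w (Fin.last k)))⁻¹)) with hφdef
        have hBmeas : MeasurableSet B := by
          have : B = {w : Fin (k+1) → S | h x < h (w (Fin.last k))}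
              ∩ ⋂ j : Fin (k+1), {w : Fin (k+1) → S | (j:ℕ) < k → h (w j) ≤ h x} := by
            ext w; simp [hBdef, Set.mem_iInter]
          rw [this]
          refine MeasurableSet.inter ?_ (MeasurableSet.iInter fun j => ?_)
          · exact (hmeas.comp (measurable_pi_apply _)) measurableSet_Ioi
          · by_cases hj : (j:ℕ) < k
            · simp only [hj, forall_true_left]
              exact (hmeas.comp (measurable_pi_apply _)) measurableSet_Iic
            · simp [hj]
        have hφmeas : Measurable φ :=
          ((hmeas.comp (measurable_pi_apply _)).inv.ennreal_ofReal).indicator hBmeas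
        have hφeq : ∀ ω : ℕ → S, φ (fun i : Fin (k+1) => ω (i + 1))
            = E'.indicator (fun ω' => ENNReal.ofReal ((h (ω' (k+1)))⁻¹)) ω := by
          intro ω
          by_cases hω : ω ∈ E'
          · have hmem : (fun i : Fin (k+1) => ω (i + 1)) ∈ B :=
              ⟨by simpa [Fin.val_last] using hω.1, fun j hj => hω.2 j hj⟩
            rw [hφdef, Set.indicator_of_mem hmem, Set.indicator_of_mem hω]
            simp [Fin.val_last]
          · have hmem : (fun i : Fin (k+1) => ω (i + 1)) ∉ B := by
              intro hc
              refine hω ⟨by simpa [Fin.val_last] using hc.1, fun m hm => ?_⟩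
              have := hc.2 ⟨m, by omega⟩ (by simpa using hm)
              simpa using this
            rw [hφdef, Set.indicator_of_notMem hmem, Set.indicator_of_notMem hω]
        have htr' := htr.transform x hx (k+1) φ hφmeas
        simp only [hφeq] at htr'
        rw [htr']
        -- compute the Plaw integral
        have hint2 : ∀ ω : ℕ → S,
            E'.indicator (fun ω' => ENNReal.ofReal ((h (ω' (k+1)))⁻¹)) ω
              * ENNReal.ofReal (h (ω (k+1)))
            = E'.indicator (fun _ => (1:ℝ≥0∞)) ω := by
          intro ω
          by_cases hω : ω ∈ E'
          · rw [Set.indicator_of_mem hω, Set.indicator_of_mem hω]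
            have hpos : 0 < h (ω (k+1)) := lt_trans hx hω.1
            rw [← ENNReal.ofReal_mul (inv_nonneg.2 hpos.le), inv_mul_cancel₀ hpos.ne',
              ENNReal.ofReal_one]
          · rw [Set.indicator_of_notMem hω, Set.indicator_of_notMem hω, zero_mul]
        simp only [hint2]
        rw [lintegral_indicator (hE'meas), setLIntegral_one]
        have hPE' : Plaw x E' = Plaw x (En (k+1)) := by
          apply le_antisymm
          · calc Plaw x E' ≤ Plaw x (En (k+1) ∪ {ω : ℕ → S | h x < h (ω 0)}) := by
                  apply measure_mono
                  intro ω hω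
                  by_cases hN : ω ∈ {ω : ℕ → S | h x < h (ω 0)}
                  · exact Or.inr hN
                  · exact Or.inl (hE'eq ▸ ⟨hω, hN⟩)
              _ ≤ Plaw x (En (k+1)) + Plaw x {ω : ℕ → S | h x < h (ω 0)} := measure_union_le _ _
              _ = Plaw x (En (k+1)) := by rw [hPN, add_zero]
          · exact measure_mono (fun ω hω => (hE'eq ▸ hω : ω ∈ E' ∩ _).1)
        rw [hPE', ← ENNReal.ofReal_inv_of_pos hx]
    simp only [hterm]
    rw [ENNReal.tsum_mul_left]
    congr 1
    have hEU : E = ⋃ n, En n := by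
      ext ω
      constructor
      · exact fun hω => Set.mem_iUnion.mpr ⟨σf ω, hmem_En ω hω⟩
      · exact fun hω => by rcases Set.mem_iUnion.mp hω with ⟨n, hn⟩; exact hEn_sub_E n hn
    have hdisj : Pairwise (Function.onFun Disjoint En) := by
      intro n m hnm
      exact Set.disjoint_left.mpr fun ω hω1 hω2 =>
        hnm ((hσ_En n ω hω1).symm.trans (hσ_En m ω hω2))
    rw [hEU, measure_iUnion hdisj hEnmeas]
  rw [key]
  -- final arithmetic
  have hEc : Eᶜ = {ω : ℕ → S | ∀ i, h (ω i) ≤ h x} := by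
    ext ω; simp [hEdef, not_lt]
  have hPE : Plaw x E ≤ 1 := prob_le_one
  have hsum : Plaw x E + Plaw x Eᶜ = 1 := by
    rw [measure_add_measure_compl hEmeas, measure_univ]
  have hfin : ENNReal.ofReal ((h x)⁻¹) * Plaw x E ≠ ⊤ :=
    ENNReal.mul_ne_top ENNReal.ofReal_ne_top (ne_of_lt (lt_of_le_of_lt hPE (by norm_num)))
  have hstep : ENNReal.ofReal ((h x)⁻¹) - ENNReal.ofReal ((h x)⁻¹) * Plaw x E
      = ENNReal.ofReal ((h x)⁻¹) * Plaw x Eᶜ := by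
    apply ENNReal.sub_eq_of_eq_add hfin
    rw [add_comm, ← mul_add, hsum, mul_one]
  rw [hstep, ← mul_assoc, ← ENNReal.ofReal_mul (hnonneg o), ← div_eq_mul_inv, hEc]
end

section
/- If h is a minimal nonnegative harmonic function for P (i.e., every harmonic k with 0 ≤ k ≤ h equals c·h for some constant c ∈ [0,1]), then for every x ∈ S^h = {h > 0}, h(X_n) → sup h, P_x^h-almost surely. -/
open MeasureTheory ProbabilityTheory ENNReal Filter

section Aux
variable {S : Type*} [MeasurableSpace S]

/-- `ofReal` of `h`. -/
noncomputable def Hf (h : S → ℝ) : S → ℝ≥0∞ := fun z => ENNReal.ofReal (h z)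

/-- The action of the Doob `h`-transform kernel on nonnegative functions,
written via the base kernel `P`. -/
noncomputable def QOp (P : Kernel S S) (h : S → ℝ) (g : S → ℝ≥0∞) : S → ℝ≥0∞ :=
  fun z => (Hf h z)⁻¹ * ∫⁻ y, Hf h y * g y ∂(P z)

variable {P : Kernel S S} [IsSFiniteKernel P] {h : S → ℝ}

lemma Hf_measurable (hmeas : Measurable h) : Measurable (Hf h) :=
  hmeas.ennreal_ofReal

omit [IsSFiniteKernel P] in
lemma QOp_mono {g₁ g₂ : S → ℝ≥0∞} (hg : g₁ ≤ g₂) : QOp P h g₁ ≤ QOp P h g₂ := by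
  intro z
  exact mul_le_mul_right (lintegral_mono fun y => mul_le_mul_right (hg y) _) _

lemma QOp_measurable (hmeas : Measurable h) {g : S → ℝ≥0∞} (hg : Measurable g) :
    Measurable (QOp P h g) := by
  apply Measurable.mul
  · exact (Hf_measurable hmeas).inv
  · exact Measurable.lintegral_kernel_prod_right'
      (((Hf_measurable hmeas).comp measurable_snd).mul (hg.comp measurable_snd))

/-- The `withDensity` kernel integrates like `QOp`. -/
lemma lintegral_Ph (hmeas : Measurable h) {g : S → ℝ≥0∞} (hg : Measurable g) (z : S) :
    ∫⁻ y, g y ∂((P.withDensity fun x y => ENNReal.ofReal (h y) / ENNReal.ofReal (h x)) z)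
      = QOp P h g z := by
  rw [Kernel.lintegral_withDensity]
  · rw [QOp, ← lintegral_const_mul _ (f := fun y => Hf h y * g y) (((Hf_measurable hmeas)).mul hg)]
    congr 1 with y
    rw [div_eq_mul_inv, Hf, Hf]
    ring
  · apply Measurable.div
    · exact (Hf_measurable hmeas).comp measurable_snd
    · exact (Hf_measurable hmeas).comp measurable_fst
  · exact hg

end Aux

section Aux2
set_option linter.unusedSectionVars false
set_option linter.unusedVariables false
variable {S : Type*} [MeasurableSpace S] {P : Kernel S S} [IsMarkovKernel P] {h : S → ℝ}

lemma lint_Hf (hmeas : Measurable h) (hnonneg : ∀ y, 0 ≤ h y) (hharm : Harmonic P h) (z : S) :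
    ∫⁻ y, Hf h y ∂(P z) = Hf h z := by
  simp only [Hf]
  rw [← ofReal_integral_eq_lintegral_ofReal (hharm z).1 (ae_of_all _ hnonneg)]
  exact congrArg ENNReal.ofReal (hharm z).2.symm

lemma Hf_ae_zero (hmeas : Measurable h) (hnonneg : ∀ y, 0 ≤ h y) (hharm : Harmonic P h)
    {z : S} (hz : h z = 0) : ∀ᵐ y ∂(P z), Hf h y = 0 := by
  have h0 : ∫⁻ y, Hf h y ∂(P z) = 0 := by
    rw [lint_Hf hmeas hnonneg hharm z]; simp [Hf, hz]
  filter_upwards [(lintegral_eq_zero_iff (Hf_measurable hmeas)).1 h0] with y hy using hy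

lemma QOp_one_le (hmeas : Measurable h) (hnonneg : ∀ y, 0 ≤ h y) (hharm : Harmonic P h)
    (z : S) : QOp P h 1 z ≤ 1 := by
  rw [QOp]
  simp only [Pi.one_apply, mul_one]
  rw [lint_Hf hmeas hnonneg hharm z]
  rcases eq_or_ne (Hf h z) 0 with h0 | h0
  · simp [h0]
  · rw [ENNReal.inv_mul_cancel h0 (by simp [Hf])]

lemma QOp_one_eq (hmeas : Measurable h) (hnonneg : ∀ y, 0 ≤ h y) (hharm : Harmonic P h)
    {z : S} (hz : 0 < h z) : QOp P h 1 z = 1 := by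
  rw [QOp]
  simp only [Pi.one_apply, mul_one]
  rw [lint_Hf hmeas hnonneg hharm z]
  exact ENNReal.inv_mul_cancel (by simp [Hf, ENNReal.ofReal_pos, hz]) (by simp [Hf])

end Aux2

section Aux3
set_option linter.unusedSectionVars false
set_option linter.unusedVariables false
variable {S : Type*} [MeasurableSpace S] {P : Kernel S S} [IsMarkovKernel P] {h : S → ℝ}
  (hmeas : Measurable h) (hnonneg : ∀ y, 0 ≤ h y) (hharm : Harmonic P h)

open Classical in
/-- Probability for the `h`-chain of hitting `C` within `N` steps (incl. time 0). -/
noncomputable def hitF (P : Kernel S S) (h : S → ℝ) (C : Set S) : ℕ → S → ℝ≥0∞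
  | 0 => C.piecewise 1 0
  | (N+1) => C.piecewise 1 (QOp P h (hitF P h C N))

variable {C : Set S} (hC : MeasurableSet C)

lemma hitF_zero_mem {z : S} (hz : z ∈ C) : hitF P h C 0 z = 1 := by
  simp [hitF, Set.piecewise, hz]

lemma hitF_zero_notmem {z : S} (hz : z ∉ C) : hitF P h C 0 z = 0 := by
  simp [hitF, Set.piecewise, hz]

lemma hitF_succ_mem (N : ℕ) {z : S} (hz : z ∈ C) : hitF P h C (N+1) z = 1 := by
  simp [hitF, Set.piecewise, hz]

lemma hitF_succ_notmem (N : ℕ) {z : S} (hz : z ∉ C) :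
    hitF P h C (N+1) z = QOp P h (hitF P h C N) z := by
  simp [hitF, Set.piecewise, hz]

include hmeas hC in
lemma hitF_measurable : ∀ N, Measurable (hitF P h C N) := by
  intro N
  induction N with
  | zero => exact Measurable.piecewise hC measurable_const measurable_const
  | succ N ih => exact Measurable.piecewise hC measurable_const (QOp_measurable hmeas ih)

include hmeas hnonneg hharm in
lemma hitF_le_one (N : ℕ) (z : S) : hitF P h C N z ≤ 1 := by
  induction N generalizing z with
  | zero => by_cases hz : z ∈ C
            · rw [hitF_zero_mem hz]
            · rw [hitF_zero_notmem hz]; exact zero_le_one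
  | succ N ih =>
    by_cases hz : z ∈ C
    · rw [hitF_succ_mem N hz]
    · rw [hitF_succ_notmem N hz]
      calc QOp P h (hitF P h C N) z ≤ QOp P h 1 z := QOp_mono (fun y => ih y) z
      _ ≤ 1 := QOp_one_le hmeas hnonneg hharm z

lemma hitF_mono : Monotone (hitF P h C) := by
  refine monotone_nat_of_le_succ ?_
  intro N
  induction N with
  | zero =>
    intro z
    by_cases hz : z ∈ C
    · rw [hitF_zero_mem hz, hitF_succ_mem 0 hz]
    · rw [hitF_zero_notmem hz]; exact zero_le
  | succ N ih =>
    intro z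
    by_cases hz : z ∈ C
    · rw [hitF_succ_mem N hz, hitF_succ_mem (N+1) hz]
    · rw [hitF_succ_notmem N hz, hitF_succ_notmem (N+1) hz]
      exact QOp_mono ih z

/-- Probability of ever hitting `C`. -/
noncomputable def hitP (P : Kernel S S) (h : S → ℝ) (C : Set S) : S → ℝ≥0∞ :=
  fun z => ⨆ N, hitF P h C N z

include hmeas hC in
lemma hitP_measurable : Measurable (hitP P h C) :=
  Measurable.iSup fun N => hitF_measurable hmeas hC N

include hmeas hnonneg hharm in
lemma hitP_le_one (z : S) : hitP P h C z ≤ 1 :=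
  iSup_le fun N => hitF_le_one hmeas hnonneg hharm N z

include hmeas hnonneg hharm hC in
lemma QOp_hitP_le : QOp P h (hitP P h C) ≤ hitP P h C := by
  intro z
  have key : QOp P h (hitP P h C) z = ⨆ N, QOp P h (hitF P h C N) z := by
    rw [QOp]
    have : ∫⁻ y, Hf h y * hitP P h C y ∂(P z)
        = ⨆ N, ∫⁻ y, Hf h y * hitF P h C N y ∂(P z) := by
      rw [← lintegral_iSup (f := fun N y => Hf h y * hitF P h C N y) (fun N => (Hf_measurable hmeas).mul (hitF_measurable hmeas hC N))
        (fun m n hmn y => mul_le_mul_right (hitF_mono hmn y) _)]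
      congr 1 with y
      rw [hitP, ENNReal.mul_iSup]
    rw [this, ENNReal.mul_iSup]
    rfl
  rw [key]
  refine iSup_le fun N => ?_
  by_cases hz : z ∈ C
  · refine le_trans ?_ (le_iSup (fun N => hitF P h C N z) 0)
    rw [hitF_zero_mem hz]
    calc QOp P h (hitF P h C N) z ≤ QOp P h 1 z :=
      QOp_mono (fun y => hitF_le_one hmeas hnonneg hharm N y) z
    _ ≤ 1 := QOp_one_le hmeas hnonneg hharm z
  · refine le_trans ?_ (le_iSup (fun N => hitF P h C N z) (N+1))
    rw [hitF_succ_notmem N hz]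

lemma QOp_iter_mono (j : ℕ) {g₁ g₂ : S → ℝ≥0∞} (hg : g₁ ≤ g₂) :
    (QOp P h)^[j] g₁ ≤ (QOp P h)^[j] g₂ := by
  induction j generalizing g₁ g₂ with
  | zero => exact hg
  | succ j ih =>
    rw [Function.iterate_succ_apply, Function.iterate_succ_apply]
    exact ih (QOp_mono hg)

/-- Probability of hitting `C` at some time `≥ j`. -/
noncomputable def wF (P : Kernel S S) (h : S → ℝ) (C : Set S) (j : ℕ) : S → ℝ≥0∞ :=
  (QOp P h)^[j] (hitP P h C)

include hmeas hC in
lemma wF_measurable (j : ℕ) : Measurable (wF P h C j) := by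
  induction j with
  | zero => exact hitP_measurable hmeas hC
  | succ j ih => rw [wF, Function.iterate_succ_apply']; exact QOp_measurable hmeas ih

include hmeas hnonneg hharm hC in
lemma wF_antitone : Antitone (wF P h C) := by
  refine antitone_nat_of_succ_le ?_
  intro j
  rw [wF, wF, Function.iterate_succ_apply]
  exact QOp_iter_mono j (QOp_hitP_le hmeas hnonneg hharm hC)

include hmeas hnonneg hharm hC in
lemma wF_le_one (j : ℕ) (z : S) : wF P h C j z ≤ 1 :=
  le_trans (wF_antitone hmeas hnonneg hharm hC (Nat.zero_le j) z)
    (hitP_le_one hmeas hnonneg hharm z)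

/-- Probability of hitting `C` infinitely often. -/
noncomputable def wL (P : Kernel S S) (h : S → ℝ) (C : Set S) : S → ℝ≥0∞ :=
  fun z => ⨅ j, wF P h C j z

include hmeas hC in
lemma wL_measurable : Measurable (wL P h C) :=
  Measurable.iInf fun j => wF_measurable hmeas hC j

lemma wL_le_hitP (z : S) : wL P h C z ≤ hitP P h C z := iInf_le _ 0

include hmeas hnonneg hharm in
lemma wL_le_one (z : S) : wL P h C z ≤ 1 :=
  le_trans (wL_le_hitP z) (hitP_le_one hmeas hnonneg hharm z)

end Aux3

section Aux4
set_option linter.unusedSectionVars false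
set_option linter.unusedVariables false
variable {S : Type*} [MeasurableSpace S] {P : Kernel S S} [IsMarkovKernel P] {h : S → ℝ}
  (hmeas : Measurable h) (hnonneg : ∀ y, 0 ≤ h y) (hharm : Harmonic P h)
  {C : Set S} (hC : MeasurableSet C)

include hmeas hnonneg hharm in
lemma wL_ne_top (z : S) : wL P h C z ≠ ∞ := by
  intro hcon
  exact absurd (hcon ▸ wL_le_one hmeas hnonneg hharm z) (by simp)

include hmeas hnonneg hharm hC in
lemma lint_Hf_wL {z : S} (hz : 0 < h z) :
    ∫⁻ y, Hf h y * wL P h C y ∂(P z) = Hf h z * wL P h C z := by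
  have hHz0 : Hf h z ≠ 0 := by simp [Hf, ENNReal.ofReal_pos, hz]
  have hHzt : Hf h z ≠ ∞ := by simp [Hf]
  have hfin : ∫⁻ y, Hf h y * wF P h C 0 y ∂(P z) ≠ ∞ := by
    refine ne_top_of_le_ne_top hHzt ?_
    calc ∫⁻ y, Hf h y * wF P h C 0 y ∂(P z) ≤ ∫⁻ y, Hf h y * 1 ∂(P z) :=
      lintegral_mono fun y => mul_le_mul_right (wF_le_one hmeas hnonneg hharm hC 0 y) _
    _ = Hf h z := by simpa using lint_Hf hmeas hnonneg hharm z
  have step1 : ∫⁻ y, Hf h y * wL P h C y ∂(P z)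
      = ⨅ j, ∫⁻ y, Hf h y * wF P h C j y ∂(P z) := by
    rw [← lintegral_iInf (f := fun j y => Hf h y * wF P h C j y)
      (fun j => (Hf_measurable hmeas).mul (wF_measurable hmeas hC j))
      (fun m n hmn y => mul_le_mul_right (wF_antitone hmeas hnonneg hharm hC hmn y) _) hfin]
    congr 1 with y
    by_cases hy : Hf h y = 0
    · simp [hy]
    · exact ENNReal.mul_iInf_of_ne hy (by simp [Hf])
  have step2 : ∀ j, ∫⁻ y, Hf h y * wF P h C j y ∂(P z) = Hf h z * wF P h C (j+1) z := by
    intro j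
    have : wF P h C (j+1) z = (Hf h z)⁻¹ * ∫⁻ y, Hf h y * wF P h C j y ∂(P z) := by
      rw [wF, Function.iterate_succ_apply']; rfl
    rw [this, ← mul_assoc, ENNReal.mul_inv_cancel hHz0 hHzt, one_mul]
  have step3 : ⨅ j, wF P h C (j+1) z = wL P h C z := by
    refine le_antisymm (le_iInf fun j => ?_) (le_iInf fun j => iInf_le _ (j+1))
    exact (iInf_le _ j).trans (wF_antitone hmeas hnonneg hharm hC (Nat.le_succ j) z)
  rw [step1]
  simp_rw [step2]
  rw [← ENNReal.mul_iInf_of_ne hHz0 hHzt, step3]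

include hmeas hnonneg hharm hC in
lemma lint_Hf_wL_zero {z : S} (hz : h z = 0) :
    ∫⁻ y, Hf h y * wL P h C y ∂(P z) = 0 := by
  have := Hf_ae_zero hmeas hnonneg hharm (P := P) hz
  rw [lintegral_eq_zero_iff (f := fun y => Hf h y * wL P h C y) ((Hf_measurable hmeas).mul (wL_measurable hmeas hC))]
  filter_upwards [this] with y hy
  simp [hy]

/-- The bound `h(z)·P_z(hit C) ≤ t` when `h ≤ t` on `C`. -/
lemma Hf_mul_hitP_le {t : ℝ} (hCsub : ∀ z ∈ C, h z ≤ t) (z : S) :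
    Hf h z * hitP P h C z ≤ ENNReal.ofReal t := by
  have key : ∀ N z, Hf h z * hitF P h C N z ≤ ENNReal.ofReal t := by
    intro N
    induction N with
    | zero =>
      intro z
      by_cases hz : z ∈ C
      · rw [hitF_zero_mem hz, mul_one]; exact ENNReal.ofReal_le_ofReal (hCsub z hz)
      · rw [hitF_zero_notmem hz, mul_zero]; exact zero_le
    | succ N ih =>
      intro z
      by_cases hz : z ∈ C
      · rw [hitF_succ_mem N hz, mul_one]; exact ENNReal.ofReal_le_ofReal (hCsub z hz)
      · rw [hitF_succ_notmem N hz]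
        rcases eq_or_ne (Hf h z) 0 with h0 | h0
        · rw [h0, zero_mul]; exact zero_le
        · rw [QOp, ← mul_assoc, ENNReal.mul_inv_cancel h0 (by simp [Hf]), one_mul]
          calc ∫⁻ y, Hf h y * hitF P h C N y ∂(P z)
              ≤ ∫⁻ _, ENNReal.ofReal t ∂(P z) := lintegral_mono fun y => ih y
          _ = ENNReal.ofReal t := by simp
  rw [hitP, ENNReal.mul_iSup]
  exact iSup_le fun N => key N z

end Aux4

section Aux5
set_option linter.unusedSectionVars false
set_option linter.unusedVariables false
variable {S : Type*} [MeasurableSpace S] {P : Kernel S S} [IsMarkovKernel P] {h : S → ℝ}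
  (hmeas : Measurable h) (hnonneg : ∀ y, 0 ≤ h y) (hharm : Harmonic P h)
  {C : Set S} (hC : MeasurableSet C)

include hmeas hnonneg hharm hC in
/-- Minimality makes the "hit `C` infinitely often" probability constant on `{h > 0}`. -/
lemma wL_const
    (hmin : ∀ k : S → ℝ, Measurable k → (∀ y, 0 ≤ k y) → (∀ y, k y ≤ h y) →
      Harmonic P k → ∃ c ∈ Set.Icc (0 : ℝ) 1, ∀ y, k y = c * h y) :
    ∃ c : ℝ, 0 ≤ c ∧ c ≤ 1 ∧ ∀ z, 0 < h z → wL P h C z = ENNReal.ofReal c := by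
  set k : S → ℝ := fun z => h z * (wL P h C z).toReal with hk
  have hwle : ∀ z, (wL P h C z).toReal ≤ 1 := by
    intro z
    refine ENNReal.toReal_le_of_le_ofReal zero_le_one ?_
    simpa using wL_le_one hmeas hnonneg hharm z
  have hofk : ∀ y, ENNReal.ofReal (k y) = Hf h y * wL P h C y := by
    intro y
    rw [hk, ENNReal.ofReal_mul (hnonneg y),
      ENNReal.ofReal_toReal (wL_ne_top hmeas hnonneg hharm y)]
    rfl
  have hknn : ∀ y, 0 ≤ k y := fun y => mul_nonneg (hnonneg y) ENNReal.toReal_nonneg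
  have hkle : ∀ y, k y ≤ h y := fun y => by
    simpa using mul_le_of_le_one_right (hnonneg y) (hwle y)
  have hkmeas : Measurable k := hmeas.mul (wL_measurable hmeas hC).ennreal_toReal
  have hkint : ∀ z, Integrable k (P z) := by
    intro z
    refine Integrable.mono (hharm z).1 hkmeas.aestronglyMeasurable (ae_of_all _ fun y => ?_)
    rw [Real.norm_eq_abs, Real.norm_eq_abs, abs_of_nonneg (hknn y), abs_of_nonneg (hnonneg y)]
    exact hkle y
  have hkey : ∀ z, ∫⁻ y, Hf h y * wL P h C y ∂(P z) = Hf h z * wL P h C z := by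
    intro z
    rcases lt_or_eq_of_le (hnonneg z) with hz | hz
    · exact lint_Hf_wL hmeas hnonneg hharm hC hz
    · rw [lint_Hf_wL_zero hmeas hnonneg hharm hC hz.symm]
      have : Hf h z = 0 := by simp [Hf, ← hz]
      rw [this, zero_mul]
  have hkharm : Harmonic P k := by
    intro z
    refine ⟨hkint z, ?_⟩
    rw [integral_eq_lintegral_of_nonneg_ae (ae_of_all _ hknn) hkmeas.aestronglyMeasurable]
    simp_rw [hofk]
    rw [hkey z, ← hofk z, ENNReal.toReal_ofReal (hknn z)]
  obtain ⟨c, hc, hck⟩ := hmin k hkmeas hknn hkle hkharm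
  refine ⟨c, hc.1, hc.2, fun z hz => ?_⟩
  have : h z * (wL P h C z).toReal = c * h z := hck z
  have h2 : (wL P h C z).toReal = c := by
    rw [mul_comm c (h z)] at this
    exact mul_left_cancel₀ (ne_of_gt hz) this
  rw [← h2, ENNReal.ofReal_toReal (wL_ne_top hmeas hnonneg hharm z)]

include hmeas hnonneg hharm hC in
lemma wL_lt_one {t : ℝ} (hCsub : ∀ z ∈ C, h z ≤ t) {z : S} (hz : 0 < h z) (hzt : t < h z) :
    wL P h C z < 1 := by
  by_contra hcon
  push_neg at hcon
  have h1 : Hf h z * 1 ≤ Hf h z * wL P h C z := mul_le_mul_right hcon _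
  have h2 : Hf h z * wL P h C z ≤ ENNReal.ofReal t :=
    le_trans (mul_le_mul_right (wL_le_hitP z) _) (Hf_mul_hitP_le hCsub z)
  rw [mul_one] at h1
  have h3 : Hf h z ≤ ENNReal.ofReal t := le_trans h1 h2
  have h4 : ENNReal.ofReal t < Hf h z := by
    rw [Hf]
    exact (ENNReal.ofReal_lt_ofReal_iff hz).2 hzt
  exact absurd h3 (not_le.2 h4)

end Aux5

section Path
set_option linter.unusedSectionVars false
set_option linter.unusedVariables false
variable {S : Type*} [MeasurableSpace S] {P : Kernel S S} [IsMarkovKernel P] {h : S → ℝ}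
  (hmeas : Measurable h) (hnonneg : ∀ y, 0 ≤ h y) (hharm : Harmonic P h)
  {C : Set S} (hC : MeasurableSet C)
  {μ : Measure (ℕ → S)}
  (hmar : ∀ (n : ℕ) (F : (Fin (n + 1) → S) → ℝ≥0∞) (g : S → ℝ≥0∞),
    Measurable F → Measurable g →
    ∫⁻ ω, F (fun i => ω i) * g (ω (n + 1)) ∂μ
      = ∫⁻ ω, F (fun i => ω i) * QOp P h g (ω n) ∂μ)

include hmeas hmar in
lemma markov_iter (j : ℕ) :
    ∀ (n : ℕ) (F : (Fin (n + 1) → S) → ℝ≥0∞) (g : S → ℝ≥0∞),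
    Measurable F → Measurable g →
    ∫⁻ ω, F (fun i => ω i) * g (ω (n + j)) ∂μ
      = ∫⁻ ω, F (fun i => ω i) * ((QOp P h)^[j] g) (ω n) ∂μ := by
  induction j with
  | zero => intro n F g _ _; rfl
  | succ j ih =>
    intro n F g hF hg
    have hF' : Measurable (fun v : Fin (n + j + 1) → S =>
        F (fun i => v (Fin.castLE (by omega) i))) :=
      hF.comp (measurable_pi_lambda _ fun i => measurable_pi_apply _)
    calc ∫⁻ ω, F (fun i => ω i) * g (ω (n + (j + 1))) ∂μ
        = ∫⁻ ω, (fun v : Fin (n + j + 1) → S => F (fun i => v (Fin.castLE (by omega) i)))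
            (fun i => ω i) * g (ω ((n + j) + 1)) ∂μ := rfl
      _ = ∫⁻ ω, (fun v : Fin (n + j + 1) → S => F (fun i => v (Fin.castLE (by omega) i)))
            (fun i => ω i) * QOp P h g (ω (n + j)) ∂μ := hmar (n + j) _ g hF' hg
      _ = ∫⁻ ω, F (fun i => ω i) * ((QOp P h)^[j] (QOp P h g)) (ω n) ∂μ :=
          ih n F (QOp P h g) hF (QOp_measurable hmeas hg)
      _ = ∫⁻ ω, F (fun i => ω i) * ((QOp P h)^[j+1] g) (ω n) ∂μ := by
          rw [Function.iterate_succ_apply]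

/-- hit `C` within the time window `[n, n+N]`. -/
def hitSet (C : Set S) (n N : ℕ) : Set (ℕ → S) := {ω | ∃ j ≤ N, ω (n + j) ∈ C}

/-- hit `C` at some time `≥ n`. -/
def tailSet (C : Set S) (n : ℕ) : Set (ℕ → S) := {ω | ∃ k, ω (n + k) ∈ C}

/-- hit `C` infinitely often. -/
def freqSet (C : Set S) : Set (ℕ → S) := {ω | ∀ n, ∃ k, ω (n + k) ∈ C}

include hC in
lemma hitSet_measurable (n N : ℕ) : MeasurableSet (hitSet C n N) := by
  have : hitSet C n N = ⋃ (j : ℕ) (_ : j ≤ N), (fun ω : ℕ → S => ω (n + j)) ⁻¹' C := by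
    ext ω; simp [hitSet]
  rw [this]
  exact MeasurableSet.biUnion (Set.to_countable _)
    (fun j _ => (measurable_pi_apply (n + j)) hC)

include hC in
lemma tailSet_measurable (n : ℕ) : MeasurableSet (tailSet C n) := by
  have : tailSet C n = ⋃ (k : ℕ), (fun ω : ℕ → S => ω (n + k)) ⁻¹' C := by
    ext ω; simp [tailSet]
  rw [this]
  exact MeasurableSet.iUnion (fun k => (measurable_pi_apply (n + k)) hC)

include hC in
lemma freqSet_measurable : MeasurableSet (freqSet C) := by
  have : freqSet C = ⋂ n, tailSet C n := by ext ω; simp [freqSet, tailSet]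
  rw [this]
  exact MeasurableSet.iInter (fun n => tailSet_measurable hC n)

lemma hitSet_succ_iff (n N : ℕ) (ω : ℕ → S) :
    ω ∈ hitSet C n (N + 1) ↔ ω n ∈ C ∨ ω ∈ hitSet C (n + 1) N := by
  constructor
  · rintro ⟨j, hj, hmem⟩
    match j with
    | 0 => exact Or.inl hmem
    | (j + 1) =>
      right
      refine ⟨j, by omega, ?_⟩
      have : n + 1 + j = n + (j + 1) := by omega
      rw [this]; exact hmem
  · rintro (hmem | ⟨j, hj, hmem⟩)
    · exact ⟨0, by omega, hmem⟩
    · refine ⟨j + 1, by omega, ?_⟩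
      have : n + (j + 1) = n + 1 + j := by omega
      rw [this]; exact hmem

include hmeas hnonneg hharm hC hmar in
lemma window_lemma : ∀ (N n : ℕ) (F : (Fin (n + 1) → S) → ℝ≥0∞), Measurable F →
    ∫⁻ ω, F (fun i => ω i) * (hitSet C n N).indicator 1 ω ∂μ
      = ∫⁻ ω, F (fun i => ω i) * hitF P h C N (ω n) ∂μ := by
  intro N
  induction N with
  | zero =>
    intro n F hF
    refine lintegral_congr fun ω => ?_
    congr 1
    by_cases hin : ω n ∈ C
    · rw [hitF_zero_mem hin, Set.indicator_of_mem (by exact ⟨0, le_refl 0, hin⟩)]; rfl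
    · rw [hitF_zero_notmem hin, Set.indicator_of_notMem]
      rintro ⟨j, hj, hmem⟩
      interval_cases j
      exact hin hmem
  | succ N ih =>
    intro n F hF
    have hiff : ∀ ω : ℕ → S, (ω ∈ hitSet C n (N+1)) = (ω n ∈ C ∨ ω ∈ hitSet C (n+1) N) :=
      fun ω => propext (hitSet_succ_iff n N ω)
    have hdec : ∀ ω : ℕ → S, F (fun i : Fin (n+1) => ω i) * (hitSet C n (N+1)).indicator 1 ω
        = F (fun i => ω i) * C.indicator 1 (ω n)
          + (F (fun i => ω i) * Set.indicator Cᶜ 1 (ω n)) * (hitSet C (n+1) N).indicator 1 ω := by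
      intro ω
      by_cases hin : ω n ∈ C
      · rw [Set.indicator_of_mem ((hitSet_succ_iff n N ω).2 (Or.inl hin)),
          Set.indicator_of_mem hin,
          Set.indicator_of_notMem (show ω n ∉ Cᶜ by simpa using hin)]
        simp
      · by_cases hin2 : ω ∈ hitSet C (n+1) N
        · rw [Set.indicator_of_mem ((hitSet_succ_iff n N ω).2 (Or.inr hin2)),
            Set.indicator_of_mem hin2, Set.indicator_of_notMem hin,
            Set.indicator_of_mem (show ω n ∈ Cᶜ by simpa using hin)]
          simp
        · rw [Set.indicator_of_notMem (fun hm => by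
              rcases (hitSet_succ_iff n N ω).1 hm with hc | hc
              exacts [hin hc, hin2 hc]),
            Set.indicator_of_notMem hin, Set.indicator_of_notMem hin2]
          simp
    have hdec2 : ∀ ω : ℕ → S, F (fun i : Fin (n+1) => ω i) * hitF P h C (N+1) (ω n)
        = F (fun i => ω i) * C.indicator 1 (ω n)
          + (F (fun i => ω i) * Set.indicator Cᶜ 1 (ω n)) * QOp P h (hitF P h C N) (ω n) := by
      intro ω
      by_cases hin : ω n ∈ C
      · rw [hitF_succ_mem N hin, Set.indicator_of_mem hin,
          Set.indicator_of_notMem (by simpa using hin)]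
        simp
      · rw [hitF_succ_notmem N hin, Set.indicator_of_notMem hin,
          Set.indicator_of_mem (by simpa using hin)]
        simp [mul_assoc]
    have hmeas1 : Measurable (fun ω : ℕ → S => F (fun i => ω i) * C.indicator 1 (ω n)) := by
      refine Measurable.mul ?_ ?_
      · exact hF.comp (measurable_pi_lambda _ fun i => measurable_pi_apply _)
      · exact (measurable_one.indicator hC).comp (measurable_pi_apply n)
    simp_rw [hdec, hdec2]
    rw [lintegral_add_left hmeas1, lintegral_add_left hmeas1]
    congr 1
    set F₂ : (Fin (n + 1 + 1) → S) → ℝ≥0∞ := fun v =>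
      F (fun i => v (Fin.castLE (by omega) i))
        * Set.indicator Cᶜ 1 (v (Fin.castLE (by omega) (Fin.last n))) with hF₂def
    have hF₂ : Measurable F₂ := by
      refine Measurable.mul ?_ ?_
      · exact hF.comp (measurable_pi_lambda _ fun i => measurable_pi_apply _)
      · exact (measurable_one.indicator hC.compl).comp (measurable_pi_apply _)
    set F₃ : (Fin (n + 1) → S) → ℝ≥0∞ := fun v =>
      F v * Set.indicator Cᶜ 1 (v (Fin.last n)) with hF₃def
    have hF₃ : Measurable F₃ :=
      hF.mul ((measurable_one.indicator hC.compl).comp (measurable_pi_apply _))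
    calc ∫⁻ ω, (F (fun i => ω i) * Set.indicator Cᶜ 1 (ω n)) * (hitSet C (n+1) N).indicator 1 ω ∂μ
        = ∫⁻ ω, F₂ (fun i => ω i) * (hitSet C (n+1) N).indicator 1 ω ∂μ :=
          lintegral_congr fun ω => rfl
      _ = ∫⁻ ω, F₂ (fun i => ω i) * hitF P h C N (ω (n+1)) ∂μ := ih (n+1) F₂ hF₂
      _ = ∫⁻ ω, F₃ (fun i => ω i) * hitF P h C N (ω (n+1)) ∂μ :=
          lintegral_congr fun ω => rfl
      _ = ∫⁻ ω, F₃ (fun i => ω i) * QOp P h (hitF P h C N) (ω n) ∂μ :=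
          hmar n F₃ (hitF P h C N) hF₃ (hitF_measurable hmeas hC N)
      _ = ∫⁻ ω, (F (fun i => ω i) * Set.indicator Cᶜ 1 (ω n)) * QOp P h (hitF P h C N) (ω n) ∂μ :=
          lintegral_congr fun ω => rfl

end Path

section Path2
set_option linter.unusedSectionVars false
set_option linter.unusedVariables false
variable {S : Type*} [MeasurableSpace S] {P : Kernel S S} [IsMarkovKernel P] {h : S → ℝ}
  (hmeas : Measurable h) (hnonneg : ∀ y, 0 ≤ h y) (hharm : Harmonic P h)
  {C : Set S} (hC : MeasurableSet C)
  {μ : Measure (ℕ → S)}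
  (hmar : ∀ (n : ℕ) (F : (Fin (n + 1) → S) → ℝ≥0∞) (g : S → ℝ≥0∞),
    Measurable F → Measurable g →
    ∫⁻ ω, F (fun i => ω i) * g (ω (n + 1)) ∂μ
      = ∫⁻ ω, F (fun i => ω i) * QOp P h g (ω n) ∂μ)

include hmeas hnonneg hharm hmar in
lemma stay_pos (hprob : IsProbabilityMeasure μ) {x : S} (hstart : μ {ω | ω 0 = x} = 1)
    (hx : 0 < h x) (n : ℕ) : ∀ᵐ ω ∂μ, 0 < h (ω n) := by
  have hTmeas : MeasurableSet {y : S | h y ≤ 0} := measurableSet_le hmeas measurable_const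
  have key : ∀ n : ℕ, μ ((fun ω : ℕ → S => ω n) ⁻¹' {y | h y ≤ 0}) = 0 := by
    intro n
    match n with
    | 0 =>
      set B : Set (ℕ → S) := (fun ω : ℕ → S => ω 0) ⁻¹' {y | h y ≤ 0} with hBdef
      have hBmeas : MeasurableSet B := (measurable_pi_apply 0) hTmeas
      have hsub : {ω : ℕ → S | ω 0 = x} ⊆ Bᶜ := by
        intro ω hω hmem
        rw [Set.mem_setOf_eq] at hω
        have : h (ω 0) ≤ 0 := hmem
        rw [hω] at this
        exact absurd this (not_le.2 hx)
      have hBc : μ Bᶜ = 1 := le_antisymm prob_le_one (hstart ▸ measure_mono hsub)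
      have := measure_compl hBmeas.compl (measure_ne_top μ Bᶜ)
      rw [compl_compl, hBc, measure_univ] at this
      simp at this
      exact this
    | (n + 1) =>
      have hg : Measurable (Set.indicator {y : S | h y ≤ 0} (1 : S → ℝ≥0∞)) :=
        measurable_one.indicator hTmeas
      have hmar1 := hmar n (fun _ => 1) _ measurable_const hg
      have hQ0 : ∀ z, QOp P h (Set.indicator {y : S | h y ≤ 0} 1) z = 0 := by
        intro z
        rw [QOp]
        have : ∀ y, Hf h y * Set.indicator {y : S | h y ≤ 0} 1 y = 0 := by
          intro y
          by_cases hy : h y ≤ 0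
          · have : Hf h y = 0 := by simp [Hf, ENNReal.ofReal_eq_zero, hy]
            rw [this, zero_mul]
          · have : Set.indicator {y : S | h y ≤ 0} (1 : S → ℝ≥0∞) y = 0 :=
              Set.indicator_of_notMem hy 1
            rw [this, mul_zero]
        simp only [this, lintegral_zero, mul_zero]
      simp only [hQ0, one_mul, mul_zero, lintegral_zero] at hmar1
      have : ∫⁻ ω, Set.indicator ((fun ω : ℕ → S => ω (n+1)) ⁻¹' {y | h y ≤ 0}) 1 ω ∂μ = 0 := by
        rw [← hmar1]
        refine lintegral_congr fun ω => ?_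
        classical
        rw [Set.indicator_apply, Set.indicator_apply]
        simp only [Set.mem_preimage, Set.mem_setOf_eq]
        split_ifs <;> rfl
      rwa [lintegral_indicator_one ((measurable_pi_apply (n+1)) hTmeas)] at this
  have := key n
  rw [ae_iff]
  have hset : {ω : ℕ → S | ¬ 0 < h (ω n)} = (fun ω : ℕ → S => ω n) ⁻¹' {y | h y ≤ 0} := by
    ext ω; simp [not_lt]
  rw [hset]
  exact this

end Path2

section Path3
set_option linter.unusedSectionVars false
set_option linter.unusedVariables false
variable {S : Type*} [MeasurableSpace S] {P : Kernel S S} [IsMarkovKernel P] {h : S → ℝ}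
  (hmeas : Measurable h) (hnonneg : ∀ y, 0 ≤ h y) (hharm : Harmonic P h)
  {C : Set S} (hC : MeasurableSet C)
  {μ : Measure (ℕ → S)}
  (hmar : ∀ (n : ℕ) (F : (Fin (n + 1) → S) → ℝ≥0∞) (g : S → ℝ≥0∞),
    Measurable F → Measurable g →
    ∫⁻ ω, F (fun i => ω i) * g (ω (n + 1)) ∂μ
      = ∫⁻ ω, F (fun i => ω i) * QOp P h g (ω n) ∂μ)

lemma tailSet_anti {n n' : ℕ} (hle : n ≤ n') : tailSet C n' ⊆ tailSet C n := by
  rintro ω ⟨k, hk⟩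
  refine ⟨(n' - n) + k, ?_⟩
  have : n + (n' - n + k) = n' + k := by omega
  rw [this]; exact hk

include hmeas hnonneg hharm hC hmar in
lemma cyl_freq (hprob : IsProbabilityMeasure μ)
    {c : ℝ} (hc0 : 0 ≤ c)
    (hconst : ∀ z, 0 < h z → wL P h C z = ENNReal.ofReal c)
    (hpos : ∀ n : ℕ, ∀ᵐ ω ∂μ, 0 < h (ω n))
    (m : ℕ) (B : Set (Fin (m+1) → S)) (hB : MeasurableSet B) :
    μ (((fun (ω : ℕ → S) (i : Fin (m+1)) => ω i) ⁻¹' B) ∩ freqSet C)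
      = ENNReal.ofReal c * μ ((fun (ω : ℕ → S) (i : Fin (m+1)) => ω i) ⁻¹' B) := by
  classical
  set F : (Fin (m+1) → S) → ℝ≥0∞ := B.indicator 1 with hFdef
  have hF : Measurable F := measurable_one.indicator hB
  set A : Set (ℕ → S) := (fun (ω : ℕ → S) (i : Fin (m+1)) => ω i) ⁻¹' B with hAdef
  have hAmeas : MeasurableSet A :=
    (measurable_pi_lambda _ fun i => measurable_pi_apply _) hB
  have hFA : ∀ ω : ℕ → S, F (fun i => ω i) = A.indicator 1 ω := by
    intro ω
    by_cases hω : ω ∈ A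
    · have e1 : F (fun i => ω i) = 1 :=
        Set.indicator_of_mem (show (fun i : Fin (m+1) => ω i) ∈ B from hω)
          (1 : (Fin (m+1) → S) → ℝ≥0∞)
      have e2 : A.indicator (1 : (ℕ → S) → ℝ≥0∞) ω = 1 := Set.indicator_of_mem hω _
      rw [e1, e2]
    · have e1 : F (fun i => ω i) = 0 :=
        Set.indicator_of_notMem (show (fun i : Fin (m+1) => ω i) ∉ B from hω)
          (1 : (Fin (m+1) → S) → ℝ≥0∞)
      have e2 : A.indicator (1 : (ℕ → S) → ℝ≥0∞) ω = 0 := Set.indicator_of_notMem hω _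
      rw [e1, e2]
  have hFle : ∀ v, F v ≤ 1 := by
    intro v
    by_cases hv : v ∈ B
    · exact le_of_eq (Set.indicator_of_mem hv _)
    · rw [hFdef, Set.indicator_of_notMem hv]; exact zero_le_one
  have hFmeas' : Measurable (fun ω : ℕ → S => F (fun i => ω i)) :=
    hF.comp (measurable_pi_lambda _ fun i => measurable_pi_apply _)
  -- Step a: windows to hitP
  have step_a : ∀ j, ∫⁻ ω, F (fun i => ω i) * (tailSet C (m+j)).indicator 1 ω ∂μ
      = ∫⁻ ω, F (fun i => ω i) * hitP P h C (ω (m+j)) ∂μ := by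
    intro j
    have hFj : Measurable (fun v : Fin (m + j + 1) → S =>
        F (fun i => v (Fin.castLE (by omega) i))) :=
      hF.comp (measurable_pi_lambda _ fun i => measurable_pi_apply _)
    have hwin : ∀ N, ∫⁻ ω, F (fun i => ω i) * (hitSet C (m+j) N).indicator 1 ω ∂μ
        = ∫⁻ ω, F (fun i => ω i) * hitF P h C N (ω (m+j)) ∂μ := by
      intro N
      have hw := window_lemma hmeas hnonneg hharm hC hmar N (m+j)
        (fun v : Fin (m + j + 1) → S => F (fun i => v (Fin.castLE (by omega) i))) hFj
      calc ∫⁻ ω, F (fun i => ω i) * (hitSet C (m+j) N).indicator 1 ω ∂μ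
          = ∫⁻ ω, (fun v : Fin (m + j + 1) → S => F (fun i => v (Fin.castLE (by omega) i)))
            (fun i => ω i) * (hitSet C (m+j) N).indicator 1 ω ∂μ :=
            lintegral_congr fun ω => rfl
        _ = ∫⁻ ω, (fun v : Fin (m + j + 1) → S => F (fun i => v (Fin.castLE (by omega) i)))
            (fun i => ω i) * hitF P h C N (ω (m+j)) ∂μ := hw
        _ = ∫⁻ ω, F (fun i => ω i) * hitF P h C N (ω (m+j)) ∂μ :=
            lintegral_congr fun ω => rfl
    have hsub : ∀ ⦃N N'⦄, N ≤ N' → hitSet C (m+j) N ⊆ hitSet C (m+j) N' := by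
      rintro N N' hle ω ⟨i, hi, hmem⟩
      exact ⟨i, hi.trans hle, hmem⟩
    have hptsup : ∀ ω : ℕ → S, F (fun i => ω i) * (tailSet C (m+j)).indicator 1 ω
        = ⨆ N, F (fun i => ω i) * (hitSet C (m+j) N).indicator 1 ω := by
      intro ω
      rw [← ENNReal.mul_iSup]
      congr 1
      by_cases ht : ω ∈ tailSet C (m+j)
      · obtain ⟨k, hk⟩ := ht
        have hm2 : ω ∈ tailSet C (m+j) := ⟨k, hk⟩
        have e2 : (tailSet C (m+j)).indicator (1 : (ℕ → S) → ℝ≥0∞) ω = 1 :=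
          Set.indicator_of_mem hm2 _
        refine le_antisymm ?_ (iSup_le fun N => ?_)
        · refine le_trans ?_ (le_iSup _ k)
          have hm1 : ω ∈ hitSet C (m+j) k := ⟨k, le_refl k, hk⟩
          have e1 : (hitSet C (m+j) k).indicator (1 : (ℕ → S) → ℝ≥0∞) ω = 1 :=
            Set.indicator_of_mem hm1 _
          rw [e1, e2]
        · by_cases hmem : ω ∈ hitSet C (m+j) N
          · have e1 : (hitSet C (m+j) N).indicator (1 : (ℕ → S) → ℝ≥0∞) ω = 1 :=
              Set.indicator_of_mem hmem _
            rw [e1, e2]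
          · have e1 : (hitSet C (m+j) N).indicator (1 : (ℕ → S) → ℝ≥0∞) ω = 0 :=
              Set.indicator_of_notMem hmem _
            rw [e1]; exact zero_le
      · have hno : ∀ N, ω ∉ hitSet C (m+j) N := by
          rintro N ⟨i, hi, hmem⟩
          exact ht ⟨i, hmem⟩
        rw [Set.indicator_of_notMem ht]
        simp [Set.indicator_of_notMem, hno]
    have hptsup2 : ∀ ω : ℕ → S, F (fun i => ω i) * hitP P h C (ω (m+j))
        = ⨆ N, F (fun i => ω i) * hitF P h C N (ω (m+j)) := by
      intro ω
      rw [← ENNReal.mul_iSup]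
      rfl
    calc ∫⁻ ω, F (fun i => ω i) * (tailSet C (m+j)).indicator 1 ω ∂μ
        = ∫⁻ ω, ⨆ N, F (fun i => ω i) * (hitSet C (m+j) N).indicator 1 ω ∂μ :=
          lintegral_congr hptsup
      _ = ⨆ N, ∫⁻ ω, F (fun i => ω i) * (hitSet C (m+j) N).indicator 1 ω ∂μ :=
          lintegral_iSup
            (fun N => hFmeas'.mul (measurable_one.indicator (hitSet_measurable hC _ N)))
            (fun N N' hle ω => mul_le_mul_right
              (Set.indicator_le_indicator_of_subset (hsub hle) (fun _ => zero_le) ω) _)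
      _ = ⨆ N, ∫⁻ ω, F (fun i => ω i) * hitF P h C N (ω (m+j)) ∂μ := iSup_congr hwin
      _ = ∫⁻ ω, ⨆ N, F (fun i => ω i) * hitF P h C N (ω (m+j)) ∂μ :=
          (lintegral_iSup
            (fun N => hFmeas'.mul ((hitF_measurable hmeas hC N).comp (measurable_pi_apply (m+j))))
            (fun N N' hle ω => mul_le_mul_right (hitF_mono hle _) _)).symm
      _ = ∫⁻ ω, F (fun i => ω i) * hitP P h C (ω (m+j)) ∂μ :=
          lintegral_congr fun ω => (hptsup2 ω).symm
  -- Step b: shift to time m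
  have step_b : ∀ j, ∫⁻ ω, F (fun i => ω i) * (tailSet C (m+j)).indicator 1 ω ∂μ
      = ∫⁻ ω, F (fun i => ω i) * wF P h C j (ω m) ∂μ := by
    intro j
    rw [step_a j]
    exact markov_iter hmeas hmar j m F (hitP P h C) hF (hitP_measurable hmeas hC)
  -- integrals as measures
  have hlhs : ∀ j, ∫⁻ ω, F (fun i => ω i) * (tailSet C (m+j)).indicator 1 ω ∂μ
      = μ (A ∩ tailSet C (m+j)) := by
    intro j
    have hpt : ∀ ω, F (fun i => ω i) * (tailSet C (m+j)).indicator 1 ω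
        = (A ∩ tailSet C (m+j)).indicator 1 ω := by
      intro ω
      rw [hFA ω, ← Pi.mul_apply, ← Set.inter_indicator_one]
    simp_rw [hpt]
    exact lintegral_indicator_one (hAmeas.inter (tailSet_measurable hC _))
  -- limit over j, set side
  have hlim_sets : μ (A ∩ freqSet C) = ⨅ j, μ (A ∩ tailSet C (m+j)) := by
    have hanti : Antitone (fun j => A ∩ tailSet C (m+j)) := fun j k hjk =>
      Set.inter_subset_inter_right _ (tailSet_anti (by omega))
    have hinter : ⋂ j, (A ∩ tailSet C (m+j)) = A ∩ freqSet C := by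
      ext ω
      constructor
      · intro hω
        have h0 := Set.mem_iInter.1 hω
        refine ⟨(h0 0).1, fun n => ?_⟩
        obtain ⟨k, hk⟩ := (h0 n).2
        refine ⟨m + k, ?_⟩
        have : n + (m + k) = m + n + k := by omega
        rw [this]; exact hk
      · rintro ⟨hA, hfreq⟩
        refine Set.mem_iInter.2 fun j => ⟨hA, ?_⟩
        obtain ⟨k, hk⟩ := hfreq (m+j)
        exact ⟨k, hk⟩
    rw [← hinter]
    exact Antitone.measure_iInter hanti
      (fun j => (hAmeas.inter (tailSet_measurable hC _)).nullMeasurableSet)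
      ⟨0, measure_ne_top μ _⟩
  -- limit over j, integral side
  have hlim_right : ⨅ j, ∫⁻ ω, F (fun i => ω i) * wF P h C j (ω m) ∂μ
      = ∫⁻ ω, F (fun i => ω i) * wL P h C (ω m) ∂μ := by
    have hpt : ∀ ω : ℕ → S, F (fun i => ω i) * wL P h C (ω m)
        = ⨅ j, F (fun i => ω i) * wF P h C j (ω m) := by
      intro ω
      by_cases hω : ω ∈ A
      · have h1 : F (fun i => ω i) = 1 := by rw [hFA ω, Set.indicator_of_mem hω]; rfl
        simp only [h1, one_mul]
        rfl
      · have h1 : F (fun i => ω i) = 0 := by rw [hFA ω, Set.indicator_of_notMem hω]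
        simp [h1]
    calc ⨅ j, ∫⁻ ω, F (fun i => ω i) * wF P h C j (ω m) ∂μ
        = ∫⁻ ω, ⨅ j, F (fun i => ω i) * wF P h C j (ω m) ∂μ :=
          (lintegral_iInf
            (fun j => hFmeas'.mul ((wF_measurable hmeas hC j).comp (measurable_pi_apply m)))
            (fun j k hjk ω => mul_le_mul_right (wF_antitone hmeas hnonneg hharm hC hjk _) _)
            (by
              refine ne_top_of_le_ne_top (by simp : (1 : ℝ≥0∞) ≠ ∞) ?_
              calc ∫⁻ ω, F (fun i => ω i) * wF P h C 0 (ω m) ∂μ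
                  ≤ ∫⁻ _, 1 ∂μ := lintegral_mono fun ω =>
                    mul_le_one' (hFle _) (wF_le_one hmeas hnonneg hharm hC 0 _)
              _ = 1 := by simp)).symm
      _ = ∫⁻ ω, F (fun i => ω i) * wL P h C (ω m) ∂μ :=
          lintegral_congr fun ω => (hpt ω).symm
  -- a.e. constancy
  have hfinal : ∫⁻ ω, F (fun i => ω i) * wL P h C (ω m) ∂μ = ENNReal.ofReal c * μ A := by
    have h1 : ∫⁻ ω, F (fun i => ω i) * wL P h C (ω m) ∂μ
        = ∫⁻ ω, ENNReal.ofReal c * F (fun i => ω i) ∂μ := by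
      refine lintegral_congr_ae ?_
      filter_upwards [hpos m] with ω hω
      rw [hconst _ hω, mul_comm]
    rw [h1, lintegral_const_mul' _ _ (by simp : (ENNReal.ofReal c) ≠ ∞)]
    congr 1
    simp_rw [hFA]
    exact lintegral_indicator_one hAmeas
  calc μ (A ∩ freqSet C) = ⨅ j, μ (A ∩ tailSet C (m+j)) := hlim_sets
    _ = ⨅ j, ∫⁻ ω, F (fun i => ω i) * wF P h C j (ω m) ∂μ :=
        iInf_congr fun j => (hlhs j).symm.trans (step_b j)
    _ = ∫⁻ ω, F (fun i => ω i) * wL P h C (ω m) ∂μ := hlim_right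
    _ = ENNReal.ofReal c * μ A := hfinal

end Path3

section Ext
set_option linter.unusedSectionVars false
set_option linter.unusedVariables false
variable {S : Type*} [MeasurableSpace S] {C : Set S} (hC : MeasurableSet C)
  {μ : Measure (ℕ → S)}

include hC in
lemma freq_meas_zero (hprob : IsProbabilityMeasure μ) {a : ℝ≥0∞} (ha : a < 1)
    (hcyl : ∀ (m : ℕ) (B : Set (Fin (m+1) → S)), MeasurableSet B →
      μ (((fun (ω : ℕ → S) (i : Fin (m+1)) => ω i) ⁻¹' B) ∩ freqSet C)
        = a * μ ((fun (ω : ℕ → S) (i : Fin (m+1)) => ω i) ⁻¹' B)) :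
    μ (freqSet C) = 0 := by
  classical
  have hatop : a ≠ ∞ := (ha.trans (by norm_num)).ne
  set 𝒞 : Set (Set (ℕ → S)) := {A | ∃ (m : ℕ) (B : Set (Fin (m+1) → S)),
    MeasurableSet B ∧ (fun (ω : ℕ → S) (i : Fin (m+1)) => ω i) ⁻¹' B = A} with h𝒞
  have hlift : ∀ (m m' : ℕ) (hmm : m ≤ m') (B : Set (Fin (m+1) → S)),
      (fun (ω : ℕ → S) (i : Fin (m+1)) => ω i) ⁻¹' B
        = (fun (ω : ℕ → S) (i : Fin (m'+1)) => ω i) ⁻¹'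
          ((fun (v : Fin (m'+1) → S) (i : Fin (m+1)) => v (Fin.castLE (by omega) i)) ⁻¹' B) := by
    intro m m' hmm B
    rfl
  have hpi : IsPiSystem 𝒞 := by
    rintro A1 ⟨m1, B1, hB1, rfl⟩ A2 ⟨m2, B2, hB2, rfl⟩ _
    refine ⟨max m1 m2,
      ((fun (v : Fin (max m1 m2 + 1) → S) (i : Fin (m1+1)) =>
        v (Fin.castLE (by omega) i)) ⁻¹' B1)
      ∩ ((fun (v : Fin (max m1 m2 + 1) → S) (i : Fin (m2+1)) =>
        v (Fin.castLE (by omega) i)) ⁻¹' B2), ?_, ?_⟩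
    · exact MeasurableSet.inter
        ((measurable_pi_lambda _ fun i => measurable_pi_apply _) hB1)
        ((measurable_pi_lambda _ fun i => measurable_pi_apply _) hB2)
    · rw [Set.preimage_inter,
        ← hlift m1 _ (le_max_left m1 m2) B1, ← hlift m2 _ (le_max_right m1 m2) B2]
  have hgen : (inferInstance : MeasurableSpace (ℕ → S)) = MeasurableSpace.generateFrom 𝒞 := by
    apply le_antisymm
    · have hmeasid : @Measurable (ℕ → S) (ℕ → S) (MeasurableSpace.generateFrom 𝒞) _
          (fun ω k => ω k) := by
        refine @measurable_pi_lambda (ℕ → S) ℕ (fun _ => S)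
          (MeasurableSpace.generateFrom 𝒞) _ (fun ω k => ω k) (fun k => ?_)
        intro T hT
        apply MeasurableSpace.measurableSet_generateFrom
        exact ⟨k, (fun v : Fin (k+1) → S => v (Fin.last k)) ⁻¹' T,
          (measurable_pi_apply _) hT, rfl⟩
      exact fun s hs => hmeasid hs
    · refine MeasurableSpace.generateFrom_le ?_
      rintro A ⟨m, B, hB, rfl⟩
      exact (measurable_pi_lambda _ fun i => measurable_pi_apply _) hB
  have hfreqmeas : MeasurableSet (freqSet C) := freqSet_measurable hC
  have hmemC : ∀ A ∈ 𝒞, MeasurableSet A := by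
    rintro A ⟨m, B, hB, rfl⟩
    exact (measurable_pi_lambda _ fun i => measurable_pi_apply _) hB
  have hfr : μ (freqSet C) = a := by
    have := hcyl 0 Set.univ MeasurableSet.univ
    simpa using this
  haveI : IsFiniteMeasure (a • μ) := by
    constructor
    rw [Measure.smul_apply, smul_eq_mul, measure_univ, mul_one]
    exact hatop.lt_top
  have hext : μ.restrict (freqSet C) = a • μ := by
    refine ext_of_generate_finite 𝒞 hgen hpi ?_ ?_
    · rintro A hA
      obtain ⟨m, B, hB, rfl⟩ := hA
      rw [Measure.restrict_apply (hmemC _ ⟨m, B, hB, rfl⟩), Measure.smul_apply, smul_eq_mul]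
      exact hcyl m B hB
    · rw [Measure.restrict_apply_univ, Measure.smul_apply, smul_eq_mul, measure_univ, mul_one]
      exact hfr
  have h2 : μ (freqSet C) = a * μ (freqSet C) := by
    have := congrArg (fun ν : Measure (ℕ → S) => ν (freqSet C)) hext
    simpa [Measure.restrict_apply hfreqmeas, Set.inter_self] using this
  rw [hfr] at h2
  rcases eq_or_ne a 0 with h0 | h0
  · rw [hfr, h0]
  · exfalso
    have h3 : a * 1 = a * a := by rw [mul_one]; exact h2
    have h4 : (1 : ℝ≥0∞) = a := by
      have := (ENNReal.mul_left_strictMono h0 hatop).injective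
          (show (fun x => x * a) 1 = (fun x => x * a) a by simp only [one_mul]; rwa [mul_one] at h3)
      exact this
    exact absurd (h4 ▸ ha) (lt_irrefl _)

end Ext

/-- Proposition 7: if `h` is a minimal nonnegative harmonic function for `P`
(every harmonic `0 ≤ k ≤ h` is `c·h` for some `c ∈ [0,1]`), then for every `x` with
`h x > 0`, `h(X_n) → sup h` almost surely under the `h`-transformed law `P_x^h`
(the law of the chain with Doob kernel `P^h` started at `x`). -/
theorem minimal_harmonic_tendsto_sup {S : Type*} [MeasurableSpace S]
    (P : ProbabilityTheory.Kernel S S) [IsMarkovKernel P]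
    (h : S → ℝ) (hmeas : Measurable h) (hnonneg : ∀ y, 0 ≤ h y)
    (hharm : Harmonic P h)
    (hmin : ∀ k : S → ℝ, Measurable k → (∀ y, 0 ≤ k y) → (∀ y, k y ≤ h y) →
      Harmonic P k → ∃ c ∈ Set.Icc (0 : ℝ) 1, ∀ y, k y = c * h y)
    (Ph : ProbabilityTheory.Kernel S S)
    (hPh : Ph = P.withDensity fun x y => ENNReal.ofReal (h y) / ENNReal.ofReal (h x))
    (Plawh : S → MeasureTheory.Measure (ℕ → S))
    (hlawh : ∀ x, 0 < h x → IsMarkovChainLawAt Ph (Plawh x) x)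
    (x : S) (hx : 0 < h x) :
    ∀ᵐ ω ∂(Plawh x),
      Filter.Tendsto (fun n => ENNReal.ofReal (h (ω n))) Filter.atTop
        (nhds (⨆ y, ENNReal.ofReal (h y))) := by
  classical
  obtain L := hlawh x hx
  haveI hprob : IsProbabilityMeasure (Plawh x) := L.isProb
  have hmar : ∀ (n : ℕ) (F : (Fin (n + 1) → S) → ℝ≥0∞) (g : S → ℝ≥0∞),
      Measurable F → Measurable g →
      ∫⁻ ω, F (fun i => ω i) * g (ω (n + 1)) ∂(Plawh x)
        = ∫⁻ ω, F (fun i => ω i) * QOp P h g (ω n) ∂(Plawh x) := by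
    intro n F g hF hg
    rw [L.markov n F g hF hg]
    refine lintegral_congr fun ω => ?_
    rw [hPh, lintegral_Ph hmeas hg]
  have hpos : ∀ n, ∀ᵐ ω ∂(Plawh x), 0 < h (ω n) :=
    stay_pos hmeas hnonneg hharm hmar L.isProb L.start hx
  set Lsup := ⨆ y, ENNReal.ofReal (h y) with hLsup
  have hq0 : ∀ q : ℚ, ENNReal.ofReal (q : ℝ) < Lsup →
      Plawh x (freqSet {z | 0 < h z ∧ h z ≤ (q : ℝ)}) = 0 := by
    intro q hq
    set Cq : Set S := {z | 0 < h z ∧ h z ≤ (q : ℝ)} with hCq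
    have hCqm : MeasurableSet Cq :=
      (measurableSet_lt measurable_const hmeas).inter
        (measurableSet_le hmeas measurable_const)
    obtain ⟨c, hc0, hc1, hconst⟩ := wL_const hmeas hnonneg hharm hCqm hmin
    obtain ⟨z0, hz0⟩ := lt_iSup_iff.1 hq
    have hz0pos : 0 < h z0 := by
      rcases lt_or_ge 0 (h z0) with hlt | hle
      · exact hlt
      · exfalso
        have : ENNReal.ofReal (h z0) = 0 := by
          simpa [ENNReal.ofReal_eq_zero] using hle
        rw [this] at hz0
        exact absurd hz0 (by simp)
    have hz0q : (q : ℝ) < h z0 := by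
      by_contra hcon
      push_neg at hcon
      exact absurd (lt_of_lt_of_le hz0 (ENNReal.ofReal_le_ofReal hcon)) (lt_irrefl _)
    have hwlt : wL P h Cq z0 < 1 :=
      wL_lt_one hmeas hnonneg hharm hCqm (fun z hz => hz.2) hz0pos hz0q
    have hclt : ENNReal.ofReal c < 1 := hconst z0 hz0pos ▸ hwlt
    have hcyl := cyl_freq hmeas hnonneg hharm hCqm hmar L.isProb hc0 hconst hpos
    exact freq_meas_zero hCqm L.isProb hclt hcyl
  have hae1 : ∀ᵐ ω ∂(Plawh x), ∀ n, 0 < h (ω n) := ae_all_iff.2 hpos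
  have hae2 : ∀ᵐ ω ∂(Plawh x), ∀ q : ℚ, ENNReal.ofReal (q : ℝ) < Lsup →
      ω ∉ freqSet {z | 0 < h z ∧ h z ≤ (q : ℝ)} := by
    rw [ae_all_iff]
    intro q
    by_cases hq : ENNReal.ofReal (q : ℝ) < Lsup
    · refine measure_mono_null ?_ (hq0 q hq)
      intro ω hω
      simp only [Set.mem_setOf_eq] at hω
      by_contra hcon
      exact hω fun _ => hcon
    · exact ae_of_all _ fun ω hcon => absurd hcon hq
  filter_upwards [hae1, hae2] with ω hω1 hω2
  have hub : ∀ n, ENNReal.ofReal (h (ω n)) ≤ Lsup :=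
    fun n => le_iSup (fun y => ENNReal.ofReal (h y)) (ω n)
  refine tendsto_of_le_liminf_of_limsup_le ?_ ?_
  · refine le_of_forall_lt fun b hb => ?_
    obtain ⟨q, hq0', hbq, hqL⟩ := ENNReal.lt_iff_exists_rat_btwn.1 hb
    have hq' : ENNReal.ofReal (q : ℝ) < Lsup := hqL
    have hnf := hω2 q hq'
    have hnf' : ∃ n, ∀ k, ω (n + k) ∉ {z | 0 < h z ∧ h z ≤ (q : ℝ)} := by
      by_contra hcon
      push_neg at hcon
      exact hnf fun n => hcon n
    obtain ⟨n0, hn0⟩ := hnf'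
    have hev : ∀ l, n0 ≤ l → ENNReal.ofReal (q : ℝ) < ENNReal.ofReal (h (ω l)) := by
      intro l hl
      have h1 : ω l ∉ {z | 0 < h z ∧ h z ≤ (q : ℝ)} := by
        have : l = n0 + (l - n0) := by omega
        rw [this]; exact hn0 _
      have h2 : 0 < h (ω l) := hω1 l
      have h3 : (q : ℝ) < h (ω l) := by
        by_contra hcon
        push_neg at hcon
        exact h1 ⟨h2, hcon⟩
      exact (ENNReal.ofReal_lt_ofReal_iff h2).2 h3
    have : b < liminf (fun n => ENNReal.ofReal (h (ω n))) atTop := by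
      refine lt_of_lt_of_le hbq ?_
      refine le_liminf_of_le (by isBoundedDefault) ?_
      filter_upwards [eventually_atTop.2 ⟨n0, fun l hl => (hev l hl).le⟩] with l hl
      exact hl
    exact this
  · exact limsup_le_of_le (by isBoundedDefault) (Filter.Eventually.of_forall hub)
end

section
/- In the setting of Proposition 7's proof: if for each continuity point γ of the distribution of L := lim h(X_n) under P_x^h, the value α = P_x^h(L ≤ γ) is the same for all x ∈ S^h, then α ∈ {0,1}; i.e., L has a degenerate distribution under P_x^h. -/
open MeasureTheory ProbabilityTheory ENNReal Filter

/-- `k`-fold application of a kernel to a function, written so that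
`Git Ph (k+1) g = Git Ph k (Ph g)`. -/
noncomputable def Git {S : Type*} [MeasurableSpace S] (Ph : ProbabilityTheory.Kernel S S) :
    ℕ → (S → ℝ≥0∞) → S → ℝ≥0∞
  | 0, g => g
  | k + 1, g => Git Ph k (fun y => ∫⁻ z, g z ∂Ph y)

lemma Git_measurable {S : Type*} [MeasurableSpace S] (Ph : ProbabilityTheory.Kernel S S)
    (hint : ∀ g : S → ℝ≥0∞, Measurable g → Measurable fun y => ∫⁻ z, g z ∂Ph y) :
    ∀ (k : ℕ) (g : S → ℝ≥0∞), Measurable g → Measurable (Git Ph k g) := by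
  intro k
  induction k with
  | zero => exact fun g hg => hg
  | succ k ih => exact fun g hg => ih _ (hint g hg)

/-- Degeneracy step in the proof of Proposition 7: let `L = lim_n h(X_n)` under the
`h`-transformed laws `P_x^h`. If for a continuity point `γ` of the distribution of `L`
the value `α = P_x^h(L ≤ γ)` is the same for all `x ∈ S^h = {h > 0}`, then `α ∈ {0,1}`;
i.e. `L` has a degenerate distribution. -/
theorem limit_distribution_degenerate {S : Type*} [MeasurableSpace S]
    (P : ProbabilityTheory.Kernel S S) [IsMarkovKernel P]
    (h : S → ℝ) (hmeas : Measurable h) (hnonneg : ∀ y, 0 ≤ h y)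
    (hharm : Harmonic P h)
    (Ph : ProbabilityTheory.Kernel S S)
    (hPh : Ph = P.withDensity fun x y => ENNReal.ofReal (h y) / ENNReal.ofReal (h x))
    (Plawh : S → MeasureTheory.Measure (ℕ → S))
    (hlawh : ∀ x, 0 < h x → IsMarkovChainLawAt Ph (Plawh x) x)
    (L : (ℕ → S) → ℝ) (hLmeas : Measurable L)
    (hL : ∀ x, 0 < h x → ∀ᵐ ω ∂(Plawh x),
      Filter.Tendsto (fun n => h (ω n)) Filter.atTop (nhds (L ω)))
    (o : S) (ho : 0 < h o)
    (γ : ℝ) (α : ℝ≥0∞)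
    (hcont : ∀ x, 0 < h x → Plawh x {ω | L ω = γ} = 0)
    (hα : ∀ x, 0 < h x → Plawh x {ω | L ω ≤ γ} = α) :
    α = 0 ∨ α = 1 := by
  classical
  set f : S → S → ℝ≥0∞ := fun x y => ENNReal.ofReal (h y) / ENNReal.ofReal (h x) with hf_def
  have huncurry : Measurable (Function.uncurry f) := by
    apply Measurable.div
    · exact ENNReal.measurable_ofReal.comp (hmeas.comp measurable_snd)
    · exact ENNReal.measurable_ofReal.comp (hmeas.comp measurable_fst)
  have hPhm : ∀ y, Ph y = (P y).withDensity (f y) := by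
    intro y; rw [hPh]; exact Kernel.withDensity_apply P huncurry y
  have hfy_meas : ∀ y, Measurable (f y) := fun y => Measurable.of_uncurry_left huncurry
  -- integral against `Ph y` as weighted integral against `P y`
  have hPhint : ∀ (g : S → ℝ≥0∞), Measurable g → ∀ y,
      ∫⁻ z, g z ∂Ph y = ∫⁻ z, f y z * g z ∂P y := by
    intro g hg y
    rw [hPhm y, lintegral_withDensity_eq_lintegral_mul _ (hfy_meas y) hg]
    rfl
  have hmeasint : ∀ g : S → ℝ≥0∞, Measurable g → Measurable fun y => ∫⁻ z, g z ∂Ph y := by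
    intro g hg
    have : (fun y => ∫⁻ z, g z ∂Ph y) = fun y => ∫⁻ z, f y z * g z ∂P y :=
      funext (hPhint g hg)
    rw [this]
    exact Measurable.lintegral_kernel_prod_right'
      (f := fun p : S × S => f p.1 p.2 * g p.2)
      (huncurry.mul (hg.comp measurable_snd))
  -- the h-transform kernel never enters {h = 0}
  have hSpos : MeasurableSet {z | 0 < h z} := measurableSet_lt measurable_const hmeas
  have hPh_null : ∀ y, Ph y {z | ¬ 0 < h z} = 0 := by
    intro y
    have ht : MeasurableSet {z : S | ¬ 0 < h z} := hSpos.compl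
    rw [hPhm y, withDensity_apply _ ht]
    rw [setLIntegral_congr_fun ht
      (fun ⦃z⦄ (hz : ¬ 0 < h z) => ?_), lintegral_zero]
    have h0 : h z = 0 := le_antisymm (not_lt.mp hz) (hnonneg z)
    show f y z = 0
    simp [hf_def, h0]
  -- `Ph y` is a probability measure on {h > 0}
  have hPh_univ : ∀ y, 0 < h y → Ph y Set.univ = 1 := by
    intro y hy
    rw [hPhm y, withDensity_apply _ MeasurableSet.univ, Measure.restrict_univ]
    have h1 : ∀ z, f y z = ENNReal.ofReal (h z) * (ENNReal.ofReal (h y))⁻¹ := by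
      intro z; simp [hf_def, div_eq_mul_inv]
    simp_rw [h1]
    rw [lintegral_mul_const _ hmeas.ennreal_ofReal,
      ← ofReal_integral_eq_lintegral_ofReal (hharm y).1 (ae_of_all _ hnonneg),
      ← (hharm y).2]
    exact ENNReal.mul_inv_cancel (ENNReal.ofReal_pos.mpr hy).ne' ENNReal.ofReal_ne_top
  -- integrating a function bounded by 1 on {h > 0}
  have hPh_bound : ∀ (g : S → ℝ≥0∞), (∀ z, 0 < h z → g z ≤ 1) → ∀ y, 0 < h y →
      ∫⁻ z, g z ∂Ph y ≤ 1 := by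
    intro g hg y hy
    calc ∫⁻ z, g z ∂Ph y ≤ ∫⁻ _, (1 : ℝ≥0∞) ∂Ph y := by
          refine lintegral_mono_ae ?_
          rw [ae_iff]
          refine measure_mono_null ?_ (hPh_null y)
          intro z hz
          simp only [Set.mem_setOf_eq] at hz ⊢
          exact fun hpos => hz (hg z hpos)
      _ = 1 := by rw [lintegral_one, hPh_univ y hy]
  have hGit_le : ∀ (k : ℕ) (g : S → ℝ≥0∞), (∀ z, 0 < h z → g z ≤ 1) →
      ∀ y, 0 < h y → Git Ph k g y ≤ 1 := by
    intro k
    induction k with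
    | zero => exact fun g hg y hy => hg y hy
    | succ k ih =>
      intro g hg y hy
      exact ih _ (fun z hz => hPh_bound g hg z hz) y hy
  -- null-set principle at the start
  have hnull : ∀ x, 0 < h x → ∀ t : Set (ℕ → S), MeasurableSet t →
      (∀ ω : ℕ → S, ω 0 = x → ω ∉ t) → Plawh x t = 0 := by
    intro x hx t ht hdisj
    haveI := (hlawh x hx).isProb
    have hsub : {ω : ℕ → S | ω 0 = x} ⊆ tᶜ := fun ω hω => hdisj ω hω
    have h1 : Plawh x tᶜ = 1 :=
      le_antisymm prob_le_one (by rw [← (hlawh x hx).start]; exact measure_mono hsub)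
    have h2 := measure_compl (μ := Plawh x) ht.compl (measure_ne_top _ _)
    rw [compl_compl, h1, measure_univ, tsub_self] at h2
    exact h2
  -- identification of marginals: ∫ g(X_k) dP_x^h = (Ph^k g)(x)
  have hlaw_eq : ∀ (k : ℕ) (g : S → ℝ≥0∞), Measurable g → ∀ x, 0 < h x →
      ∫⁻ ω, g (ω k) ∂Plawh x = Git Ph k g x := by
    intro k
    induction k with
    | zero =>
      intro g hg x hx
      haveI := (hlawh x hx).isProb
      have hg0 : Measurable fun ω : ℕ → S => g (ω 0) := hg.comp (measurable_pi_apply 0)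
      have hae : ∀ᵐ ω ∂Plawh x, g (ω 0) = g x := by
        rw [ae_iff]
        refine hnull x hx _ ?_ ?_
        · exact (hg0 (measurableSet_singleton (g x))).compl
        · intro ω h0 hmem
          exact hmem (by simp [h0])
      calc ∫⁻ ω, g (ω 0) ∂Plawh x = ∫⁻ _, g x ∂Plawh x := lintegral_congr_ae hae
        _ = g x := by simp
    | succ k ih =>
      intro g hg x hx
      have hm := (hlawh x hx).markov k (fun _ => 1) g measurable_const hg
      simp only [one_mul] at hm
      rw [hm, ih (fun y => ∫⁻ z, g z ∂Ph y) (hmeasint g hg) x hx]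
      rfl
  set μ : Measure (ℕ → S) := Plawh o with hμ_def
  haveI : IsProbabilityMeasure μ := (hlawh o ho).isProb
  -- positivity of h along the chain
  have hpos : ∀ n : ℕ, ∀ᵐ ω ∂μ, 0 < h (ω n) := by
    intro n
    rw [ae_iff]
    match n with
    | 0 =>
      have hA : MeasurableSet {ω : ℕ → S | 0 < h (ω 0)} := by
        exact measurableSet_lt measurable_const (hmeas.comp (measurable_pi_apply 0))
      refine hnull o ho _ hA.compl ?_
      intro ω h0 hmem
      exact hmem (by simpa [h0] using ho)
    | Nat.succ n =>
      set g0 : S → ℝ≥0∞ := ({z | ¬ 0 < h z}).indicator 1 with hg0_def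
      have hg0 : Measurable g0 := measurable_const.indicator hSpos.compl
      have hA : MeasurableSet {ω : ℕ → S | 0 < h (ω (n + 1))} := by
        exact measurableSet_lt measurable_const (hmeas.comp (measurable_pi_apply (n+1)))
      have hset : MeasurableSet {ω : ℕ → S | ¬ 0 < h (ω (n + 1))} := hA.compl
      have h1 : μ {ω | ¬ 0 < h (ω (n + 1))} = ∫⁻ ω, g0 (ω (n + 1)) ∂μ := by
        rw [← lintegral_indicator_one hset]
        refine lintegral_congr fun ω => ?_
        by_cases hc : 0 < h (ω (n + 1)) <;>
          simp [hg0_def, Set.indicator_apply, hc]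
      have hm := (hlawh o ho).markov n (fun _ => 1) g0 measurable_const hg0
      simp only [one_mul] at hm
      have hinner : ∀ y, ∫⁻ z, g0 z ∂Ph y = 0 := by
        intro y
        rw [hg0_def, lintegral_indicator_one (show MeasurableSet {z : S | ¬ 0 < h z} from hSpos.compl), hPh_null y]
      rw [h1, hm]
      simp [hinner]
  -- the iteration identity
  have hiter : ∀ (n : ℕ) (F : (Fin (n + 1) → S) → ℝ≥0∞), Measurable F →
      ∀ (k : ℕ) (g : S → ℝ≥0∞), Measurable g →
      ∫⁻ ω, F (fun i => ω i) * g (ω (n + k)) ∂μ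
        = ∫⁻ ω, F (fun i => ω i) * Git Ph k g (ω n) ∂μ := by
    intro n F hF k
    induction k with
    | zero => intro g hg; rfl
    | succ k ih =>
      intro g hg
      set F' : (Fin (n + k + 1) → S) → ℝ≥0∞ :=
        fun v => F (fun i => v (Fin.castLE (by omega) i)) with hF'_def
      have hF' : Measurable F' :=
        hF.comp (measurable_pi_lambda _ fun i => measurable_pi_apply _)
      have hm := (hlawh o ho).markov (n + k) F' g hF' hg
      have hkey : ∀ ω : ℕ → S, F' (fun i => ω i) = F (fun i => ω i) := by
        intro ω
        simp [hF'_def, Fin.coe_castLE]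
      simp only [hkey] at hm
      have heq1 : ∫⁻ ω, F (fun i => ω i) * g (ω (n + (k + 1))) ∂μ
          = ∫⁻ ω, F (fun i => ω i) * g (ω (n + k + 1)) ∂μ := rfl
      rw [heq1, hm, ih (fun y => ∫⁻ z, g z ∂Ph y) (hmeasint g hg)]
      rfl
  -- the indicator functions
  set gind : S → ℝ≥0∞ := ({z | h z ≤ γ}).indicator 1 with hgind_def
  have hsγ : MeasurableSet {z : S | h z ≤ γ} := hmeas measurableSet_Iic
  have hgind : Measurable gind := measurable_const.indicator hsγ
  have hgind_le : ∀ z, gind z ≤ 1 := by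
    intro z
    by_cases hc : h z ≤ γ <;> simp [hgind_def, Set.indicator_apply, hc]
  set ind : (ℕ → S) → ℝ≥0∞ := ({ω | L ω ≤ γ}).indicator 1 with hind_def
  have hsL : MeasurableSet {ω : ℕ → S | L ω ≤ γ} := hLmeas measurableSet_Iic
  have hind_meas : Measurable ind := measurable_const.indicator hsL
  have hind_le : ∀ ω, ind ω ≤ 1 := by
    intro ω
    by_cases hc : L ω ≤ γ <;> simp [hind_def, Set.indicator_apply, hc]
  -- a.e. pointwise convergence of indicators
  have haeconv : ∀ x, 0 < h x → ∀ᵐ ω ∂Plawh x,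
      Tendsto (fun m => gind (ω m)) atTop (nhds (ind ω)) := by
    intro x hx
    have hne : ∀ᵐ ω ∂Plawh x, L ω ≠ γ := by
      rw [ae_iff]
      simpa using hcont x hx
    filter_upwards [hL x hx, hne] with ω hT hωne
    rcases lt_or_gt_of_ne hωne with hlt | hgt
    · have hval : ind ω = 1 := by simp [hind_def, Set.indicator_apply, hlt.le]
      rw [hval]
      refine Tendsto.congr' ?_ tendsto_const_nhds
      filter_upwards [hT.eventually_lt_const hlt] with m hm
      simp [hgind_def, Set.indicator_apply, hm.le]
    · have hval : ind ω = 0 := by simp [hind_def, Set.indicator_apply, not_le.mpr hgt]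
      rw [hval]
      refine Tendsto.congr' ?_ tendsto_const_nhds
      filter_upwards [hT.eventually_const_lt hgt] with m hm
      simp [hgind_def, Set.indicator_apply, not_le.mpr hm]
  -- α is not ⊤
  have hα_le : α ≤ 1 := by
    haveI := (hlawh o ho).isProb
    rw [← hα o ho]
    exact prob_le_one
  have hα_top : α ≠ ⊤ := (lt_of_le_of_lt hα_le one_lt_top).ne
  -- convergence of the iterated kernel to α
  have hGit_tendsto : ∀ y, 0 < h y → Tendsto (fun k => Git Ph k gind y) atTop (nhds α) := by
    intro y hy
    haveI := (hlawh y hy).isProb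
    have heq : (fun k => Git Ph k gind y) = fun k => ∫⁻ ω, gind (ω k) ∂Plawh y :=
      funext fun k => (hlaw_eq k gind hgind y hy).symm
    rw [heq]
    have hlim : α = ∫⁻ ω, ind ω ∂Plawh y := by
      rw [hind_def, lintegral_indicator_one hsL, hα y hy]
    rw [hlim]
    refine tendsto_lintegral_of_dominated_convergence (fun _ => 1)
      (fun k => hgind.comp (measurable_pi_apply k)) (fun k => ae_of_all _ fun ω => hgind_le _)
      (by simp) ?_
    exact haeconv y hy
  -- key identity:  μ(h(X_n) ≤ γ, L ≤ γ) = α μ(h(X_n) ≤ γ)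
  have key2 : ∀ n : ℕ, ∫⁻ ω, gind (ω n) * ind ω ∂μ = α * ∫⁻ ω, gind (ω n) ∂μ := by
    intro n
    have hFn : Measurable fun v : Fin (n + 1) → S => gind (v (Fin.last n)) :=
      hgind.comp (measurable_pi_apply _)
    have key1 : ∀ k, ∫⁻ ω, gind (ω n) * gind (ω (n + k)) ∂μ
        = ∫⁻ ω, gind (ω n) * Git Ph k gind (ω n) ∂μ := by
      intro k
      have := hiter n (fun v => gind (v (Fin.last n))) hFn k gind hgind
      simpa [Fin.val_last] using this
    -- limit of the LHS
    have hL1 : Tendsto (fun k => ∫⁻ ω, gind (ω n) * gind (ω (n + k)) ∂μ) atTop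
        (nhds (∫⁻ ω, gind (ω n) * ind ω ∂μ)) := by
      refine tendsto_lintegral_of_dominated_convergence (fun _ => 1)
        (fun k => (hgind.comp (measurable_pi_apply n)).mul
          (hgind.comp (measurable_pi_apply (n + k))))
        (fun k => ae_of_all _ fun ω => mul_le_one' (hgind_le _) (hgind_le _))
        (by simp) ?_
      filter_upwards [haeconv o ho] with ω hT
      have hadd : Tendsto (fun k => n + k) atTop atTop := by
        refine tendsto_atTop_mono (fun k => Nat.le_add_left k n) tendsto_id
      exact ENNReal.Tendsto.const_mul (hT.comp hadd)
        (Or.inr (lt_of_le_of_lt (hgind_le _) one_lt_top).ne)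
    -- limit of the RHS
    have hL2 : Tendsto (fun k => ∫⁻ ω, gind (ω n) * Git Ph k gind (ω n) ∂μ) atTop
        (nhds (∫⁻ ω, gind (ω n) * α ∂μ)) := by
      refine tendsto_lintegral_of_dominated_convergence (fun _ => 1)
        (fun k => (hgind.comp (measurable_pi_apply n)).mul
          ((Git_measurable Ph hmeasint k gind hgind).comp (measurable_pi_apply n)))
        ?_ (by simp) ?_
      · intro k
        filter_upwards [hpos n] with ω hω
        calc gind (ω n) * Git Ph k gind (ω n) ≤ 1 * 1 :=
              mul_le_mul' (hgind_le _) (hGit_le k gind (fun z _ => hgind_le z) _ hω)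
          _ = 1 := one_mul 1
      · filter_upwards [hpos n] with ω hω
        exact ENNReal.Tendsto.const_mul (hGit_tendsto (ω n) hω)
          (Or.inr (lt_of_le_of_lt (hgind_le _) one_lt_top).ne)
    have heqseq : (fun k => ∫⁻ ω, gind (ω n) * gind (ω (n + k)) ∂μ)
        = fun k => ∫⁻ ω, gind (ω n) * Git Ph k gind (ω n) ∂μ := funext key1
    rw [heqseq] at hL1
    have := tendsto_nhds_unique hL1 hL2
    rw [this]
    have hgn : Measurable fun ω : ℕ → S => gind (ω n) := by
      exact hgind.comp (measurable_pi_apply n)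
    simp_rw [mul_comm (gind _) α]
    rw [lintegral_const_mul α hgn]
  -- pass to the limit n → ∞ in key2
  have hL3 : Tendsto (fun n => ∫⁻ ω, gind (ω n) * ind ω ∂μ) atTop
      (nhds (∫⁻ ω, ind ω * ind ω ∂μ)) := by
    refine tendsto_lintegral_of_dominated_convergence (fun _ => 1)
      (fun n => (hgind.comp (measurable_pi_apply n)).mul hind_meas)
      (fun n => ae_of_all _ fun ω => mul_le_one' (hgind_le _) (hind_le _))
      (by simp) ?_
    filter_upwards [haeconv o ho] with ω hT
    exact ENNReal.Tendsto.mul_const hT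
      (Or.inr (lt_of_le_of_lt (hind_le _) one_lt_top).ne)
  have hL4 : Tendsto (fun n => α * ∫⁻ ω, gind (ω n) ∂μ) atTop (nhds (α * α)) := by
    have hBn : Tendsto (fun n => ∫⁻ ω, gind (ω n) ∂μ) atTop (nhds α) := by
      have hlim : α = ∫⁻ ω, ind ω ∂μ := by
        rw [hind_def, lintegral_indicator_one hsL, hμ_def, hα o ho]
      rw [hlim]
      refine tendsto_lintegral_of_dominated_convergence (fun _ => 1)
        (fun n => hgind.comp (measurable_pi_apply n))
        (fun n => ae_of_all _ fun ω => hgind_le _) (by simp) ?_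
      exact haeconv o ho
    exact ENNReal.Tendsto.const_mul hBn (Or.inr hα_top)
  have heqseq2 : (fun n => ∫⁻ ω, gind (ω n) * ind ω ∂μ)
      = fun n => α * ∫⁻ ω, gind (ω n) ∂μ := funext key2
  rw [heqseq2] at hL3
  have hself : ∫⁻ ω, ind ω * ind ω ∂μ = α * α := tendsto_nhds_unique hL3 hL4
  have hii : ∫⁻ ω, ind ω * ind ω ∂μ = α := by
    have : ∀ ω, ind ω * ind ω = ind ω := by
      intro ω
      by_cases hc : L ω ≤ γ <;> simp [hind_def, Set.indicator_apply, hc]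
    simp_rw [this]
    rw [hind_def, lintegral_indicator_one hsL, hμ_def, hα o ho]
  have hαα : α * α = α := by rw [← hself, hii]
  rcases eq_or_ne α 0 with h0 | h0
  · exact Or.inl h0
  · right
    have h1 : α * α = α * 1 := by rw [mul_one]; exact hαα
    exact (ENNReal.mul_right_inj h0 hα_top).mp h1
end

section
/- Let ν be a nondegenerate probability measure on ℝ^d with everywhere-finite moment generating function φ and mean μ = ∫ x ν(dx) ≠ 0. If u ≠ 0 satisfies φ(u) = 1, then ⟨u, μ⟩ < 0 and ⟨u, grad φ(u)⟩ > 0. -/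
open MeasureTheory ProbabilityTheory ENNReal Filter

open scoped RealInnerProductSpace

open scoped NNReal

lemma abs_le_exp_add (t : ℝ) : |t| ≤ Real.exp t + Real.exp (-t) := by
  refine abs_le.2 ⟨?_, ?_⟩
  · nlinarith [Real.add_one_le_exp (-t), Real.exp_pos t]
  · nlinarith [Real.add_one_le_exp t, Real.exp_pos (-t)]

lemma jensen_key {α : Type*} [MeasurableSpace α] (m : Measure α) [IsProbabilityMeasure m]
    (Y : α → ℝ) (hYi : Integrable Y m) (hEi : Integrable (fun x => Real.exp (Y x)) m)
    (hE : ∫ x, Real.exp (Y x) ∂m = 1) (hc : ∀ c : ℝ, ¬ (Y =ᵐ[m] fun _ => c)) :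
    ∫ x, Y x ∂m < 0 := by
  have h := strictConvexOn_exp.ae_eq_const_or_map_average_lt
    Real.continuous_exp.continuousOn isClosed_univ
    (Filter.Eventually.of_forall fun x => Set.mem_univ (Y x)) hYi hEi
  rcases h with h | h
  · exact absurd h (hc _)
  · rw [average_eq_integral, average_eq_integral, hE] at h
    exact (Real.exp_lt_one_iff).mp h

lemma norm_le_sum_abs (d : ℕ) (x : EuclideanSpace ℝ (Fin d)) : ‖x‖ ≤ ∑ i, |x i| := by
  rw [EuclideanSpace.norm_eq]
  have h1 : ∑ i, ‖x i‖ ^ 2 ≤ (∑ i, ‖x i‖) ^ 2 :=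
    Finset.sum_sq_le_sq_sum_of_nonneg (fun i _ => norm_nonneg _)
  calc Real.sqrt (∑ i, ‖x i‖ ^ 2) ≤ Real.sqrt ((∑ i, ‖x i‖) ^ 2) := Real.sqrt_le_sqrt h1
    _ = ∑ i, ‖x i‖ := Real.sqrt_sq (Finset.sum_nonneg fun i _ => norm_nonneg _)
    _ = ∑ i, |x i| := by simp [Real.norm_eq_abs]

lemma integrable_exp_smul (d : ℕ) (ν : MeasureTheory.Measure (EuclideanSpace ℝ (Fin d)))
    [IsProbabilityMeasure ν]
    (hmgf : ∀ w : EuclideanSpace ℝ (Fin d),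
      MeasureTheory.Integrable (fun x => Real.exp ⟪w, x⟫) ν)
    (w : EuclideanSpace ℝ (Fin d)) :
    Integrable (fun x => Real.exp ⟪w, x⟫ • x) ν := by
  have hg : Integrable (fun x : EuclideanSpace ℝ (Fin d) =>
      ∑ i : Fin d, (Real.exp ⟪w + EuclideanSpace.single i (1:ℝ), x⟫
      + Real.exp ⟪w - EuclideanSpace.single i (1:ℝ), x⟫)) ν := by
    apply integrable_finset_sum
    intro i _
    exact (hmgf _).add (hmgf _)
  have hm : AEStronglyMeasurable (fun x : EuclideanSpace ℝ (Fin d) =>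
      Real.exp ⟪w, x⟫ • x) ν := by
    apply Continuous.aestronglyMeasurable
    exact (Real.continuous_exp.comp (continuous_const.inner continuous_id)).smul continuous_id
  refine Integrable.mono' hg hm ?_
  refine Filter.Eventually.of_forall fun x => ?_
  have hsingle : ∀ i, ⟪EuclideanSpace.single i (1:ℝ), x⟫ = x i := by
    intro i; simp [EuclideanSpace.inner_single_left]
  calc ‖Real.exp ⟪w, x⟫ • x‖ = Real.exp ⟪w, x⟫ * ‖x‖ := by
        rw [norm_smul, Real.norm_eq_abs, abs_of_pos (Real.exp_pos _)]
    _ ≤ Real.exp ⟪w, x⟫ * ∑ i, |x i| := by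
        exact mul_le_mul_of_nonneg_left (norm_le_sum_abs d x) (Real.exp_pos _).le
    _ = ∑ i, Real.exp ⟪w, x⟫ * |x i| := Finset.mul_sum _ _ _
    _ ≤ ∑ i, (Real.exp ⟪w + EuclideanSpace.single i (1:ℝ), x⟫
          + Real.exp ⟪w - EuclideanSpace.single i (1:ℝ), x⟫) := by
        refine Finset.sum_le_sum fun i _ => ?_
        rw [inner_add_left, inner_sub_left, hsingle, Real.exp_add, Real.exp_sub]
        have h := abs_le_exp_add (x i)
        have hE := Real.exp_pos ⟪w, x⟫
        have := Real.exp_pos (x i)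
        rw [div_eq_mul_inv, ← Real.exp_neg]
        nlinarith [Real.exp_pos (-(x i))]


/-- Let `ν` be a nondegenerate probability measure on `ℝ^d` with everywhere finite moment
generating function `φ(w) = ∫ e^{⟨w,x⟩} ν(dx)` and mean `μ = ∫ x ν(dx) ≠ 0`. If `u ≠ 0`
satisfies `φ(u) = 1`, then `⟨u, μ⟩ < 0` and `⟨u, grad φ(u)⟩ > 0`, where
`grad φ(u) = ∫ x e^{⟨u,x⟩} ν(dx)`. -/
theorem tilt_drift_signs (d : ℕ) (ν : MeasureTheory.Measure (EuclideanSpace ℝ (Fin d)))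
    [IsProbabilityMeasure ν]
    (hmgf : ∀ w : EuclideanSpace ℝ (Fin d),
      MeasureTheory.Integrable (fun x => Real.exp ⟪w, x⟫) ν)
    (hnondeg : ∀ w : EuclideanSpace ℝ (Fin d), w ≠ 0 → ∀ c : ℝ, ν {x | ⟪w, x⟫ = c} < 1)
    (hmean : (∫ x, x ∂ν) ≠ 0)
    (u : EuclideanSpace ℝ (Fin d)) (hu0 : u ≠ 0)
    (hu : ∫ x, Real.exp ⟪u, x⟫ ∂ν = 1) :
    ⟪u, ∫ x, x ∂ν⟫ < 0 ∧ 0 < ⟪u, ∫ x, Real.exp ⟪u, x⟫ • x ∂ν⟫ := by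
  set Y : EuclideanSpace ℝ (Fin d) → ℝ := fun x => ⟪u, x⟫ with hYdef
  have hYcont : Continuous Y := continuous_const.inner continuous_id
  -- integrability of Y
  have hYint : Integrable Y ν := by
    refine Integrable.mono' ((hmgf u).add (hmgf (-u)))
      hYcont.aestronglyMeasurable (Filter.Eventually.of_forall fun x => ?_)
    simp only [Real.norm_eq_abs, Pi.add_apply, inner_neg_left]
    exact abs_le_exp_add (Y x)
  -- Y not a.e. constant
  have notconst : ∀ c : ℝ, ¬ (Y =ᵐ[ν] fun _ => c) := by
    intro c h
    have hms : MeasurableSet {x : EuclideanSpace ℝ (Fin d) | Y x = c} :=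
      hYcont.measurable (measurableSet_singleton c)
    have h' : ∀ᵐ x ∂ν, Y x = c := h
    rw [ae_iff] at h'
    have h0 : ν {x | Y x = c}ᶜ = 0 := by
      rw [Set.compl_setOf]; exact h'
    have h1 : ν {x | Y x = c} = 1 := (prob_compl_eq_zero_iff hms).mp h0
    exact absurd h1 (hnondeg u hu0 c).ne
  -- integrability of x
  have hxint : Integrable (fun x : EuclideanSpace ℝ (Fin d) => x) ν := by
    have := integrable_exp_smul d ν hmgf 0
    simpa using this
  -- Claim 1
  have c1 : ⟪u, ∫ x, x ∂ν⟫ < 0 := by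
    rw [← integral_inner hxint]
    exact jensen_key ν Y hYint (hmgf u) hu notconst
  -- tilted measure
  set f : EuclideanSpace ℝ (Fin d) → ℝ≥0 := fun x => (Real.exp (Y x)).toNNReal with hfdef
  have hfmeas : Measurable f := (Real.continuous_exp.comp hYcont).measurable.real_toNNReal
  have hfcoe : ∀ x, (f x : ℝ) = Real.exp (Y x) := fun x =>
    Real.coe_toNNReal _ (Real.exp_pos _).le
  set m : Measure (EuclideanSpace ℝ (Fin d)) := ν.withDensity (fun x => (f x : ℝ≥0∞)) with hmdef
  have hm1 : m Set.univ = 1 := by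
    rw [hmdef, withDensity_apply _ MeasurableSet.univ, Measure.restrict_univ]
    have : ∀ x, ((f x : ℝ≥0∞)) = ENNReal.ofReal (Real.exp (Y x)) := by
      intro x; rfl
    simp_rw [this]
    rw [← ofReal_integral_eq_lintegral_ofReal (hmgf u)
      (Filter.Eventually.of_forall fun x => (Real.exp_pos _).le), hu, ofReal_one]
  haveI : IsProbabilityMeasure m := ⟨hm1⟩
  -- integrability of Y under m
  have hYm : Integrable Y m := by
    rw [hmdef, integrable_withDensity_iff_integrable_smul hfmeas]
    have heq : (fun x => f x • Y x) = fun x => Real.exp (Y x) * Y x :=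
      funext fun x => by rw [NNReal.smul_def, hfcoe, smul_eq_mul]
    rw [heq]
    refine Integrable.mono' ((hmgf ((2:ℝ) • u)).add (integrable_const 1))
      (((Real.continuous_exp.comp hYcont).mul hYcont).aestronglyMeasurable)
      (Filter.Eventually.of_forall fun x => ?_)
    have h2 : ⟪(2:ℝ) • u, x⟫ = 2 * Y x := real_inner_smul_left u x 2
    simp only [Pi.add_apply, h2]
    rw [Real.norm_eq_abs, abs_mul, abs_of_pos (Real.exp_pos _)]
    have habs := abs_le_exp_add (Y x)
    have hE := Real.exp_pos (Y x)
    have h2e : Real.exp (2 * Y x) = Real.exp (Y x) * Real.exp (Y x) := by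
      rw [two_mul, Real.exp_add]
    have hmi : Real.exp (Y x) * Real.exp (-(Y x)) = 1 := by
      rw [← Real.exp_add]; simp
    nlinarith [mul_le_mul_of_nonneg_left habs hE.le]
  -- exp(-Y) integrable under m, integral = 1
  have hexpnegm : Integrable (fun x => Real.exp (-(Y x))) m := by
    rw [hmdef, integrable_withDensity_iff_integrable_smul hfmeas]
    have : (fun x => f x • Real.exp (-(Y x))) = fun _ => (1:ℝ) := by
      funext x
      rw [NNReal.smul_def, hfcoe, smul_eq_mul, ← Real.exp_add]
      simp
    rw [this]
    exact integrable_const 1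
  have hintexpneg : ∫ x, Real.exp (-(Y x)) ∂m = 1 := by
    rw [hmdef, integral_withDensity_eq_integral_smul hfmeas]
    have : (fun x => f x • Real.exp (-(Y x))) = fun _ => (1:ℝ) := by
      funext x
      rw [NNReal.smul_def, hfcoe, smul_eq_mul, ← Real.exp_add]
      simp
    rw [this]
    simp
  -- -Y not a.e. constant under m
  have notconst' : ∀ c : ℝ, ¬ ((fun x => -(Y x)) =ᵐ[m] fun _ => c) := by
    intro c h
    rw [hmdef, withDensity_ae_eq hfmeas.coe_nnreal_ennreal.aemeasurable
      (Filter.Eventually.of_forall fun x => by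
        simp [hfdef, Real.toNNReal_eq_zero, not_le, Real.exp_pos])] at h
    have : Y =ᵐ[ν] fun _ => -c := by
      filter_upwards [h] with x hx
      linarith
    exact notconst (-c) this
  have h2 := jensen_key m (fun x => -(Y x)) hYm.neg hexpnegm hintexpneg notconst'
  have h2' : 0 < ∫ x, Y x ∂m := by
    rw [integral_neg] at h2
    linarith
  -- identify ∫ Y dm with inner product
  have hident : ∫ x, Y x ∂m = ⟪u, ∫ x, Real.exp ⟪u, x⟫ • x ∂ν⟫ := by
    rw [hmdef, integral_withDensity_eq_integral_smul hfmeas,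
      ← integral_inner (integrable_exp_smul d ν hmgf u)]
    congr 1
    funext x
    rw [NNReal.smul_def, hfcoe, smul_eq_mul, real_inner_smul_right]
  exact ⟨c1, hident ▸ h2'⟩
end

section
/- For Pólya's urn chain with states (r,t), 0 < r < t, and any 0 < p < 1 with q = 1 − p, the function h_p(r,t) = (t−1)·C(t−2, r−1)·p^{r−1} q^{t−r−1} is harmonic, and the corresponding h_p-transformed chain is a simple random walk: transition (r,t) → (r+1,t+1) has probability p and (r,t) → (r,t+1) has probability q. -/
/-- Transition probabilities of Pólya's urn chain on states `(r, t)`: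
`(r,t) → (r+1,t+1)` with probability `r/t`, `(r,t) → (r,t+1)` with probability `1 - r/t`. -/
noncomputable def polyaP : ℕ × ℕ → ℕ × ℕ → ℝ := fun x y =>
  if y = (x.1 + 1, x.2 + 1) then (x.1 : ℝ) / (x.2 : ℝ)
  else if y = (x.1, x.2 + 1) then 1 - (x.1 : ℝ) / (x.2 : ℝ)
  else 0

/-- The harmonic function `h_p(r,t) = (t-1) · C(t-2, r-1) · p^{r-1} q^{t-r-1}`. -/
noncomputable def polyaHp (p : ℝ) : ℕ × ℕ → ℝ := fun x =>
  ((x.2 : ℝ) - 1) * (Nat.choose (x.2 - 2) (x.1 - 1) : ℝ)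
    * p ^ (x.1 - 1) * (1 - p) ^ (x.2 - x.1 - 1)

/-- For Pólya's urn and any `0 < p < 1`, `q = 1 - p`, the function
`h_p(r,t) = (t-1) C(t-2,r-1) p^{r-1} q^{t-r-1}` is harmonic, and the `h_p`-transformed
chain is the simple random walk: `P^{h_p}((r,t),(r+1,t+1)) = p` and
`P^{h_p}((r,t),(r,t+1)) = q`. -/
theorem polya_hp_harmonic_and_transform (p : ℝ) (hp0 : 0 < p) (hp1 : p < 1)
    (r t : ℕ) (hr : 0 < r) (hrt : r < t) :
    (polyaHp p (r, t) = ∑' y : ℕ × ℕ, polyaP (r, t) y * polyaHp p y)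
      ∧ polyaP (r, t) (r + 1, t + 1) * polyaHp p (r + 1, t + 1) / polyaHp p (r, t) = p
      ∧ polyaP (r, t) (r, t + 1) * polyaHp p (r, t + 1) / polyaHp p (r, t) = 1 - p := by
  obtain ⟨a, rfl⟩ : ∃ a, r = a + 1 := ⟨r - 1, by omega⟩
  obtain ⟨b, rfl⟩ : ∃ b, t = a + b + 2 := ⟨t - a - 2, by omega⟩
  have hq : (0:ℝ) < 1 - p := by linarith
  -- simplify the three h-values
  have eH : polyaHp p (a + 1, a + b + 2)
      = ((a:ℝ) + b + 1) * (Nat.choose (a + b) a : ℝ) * p ^ a * (1 - p) ^ b := by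
    have e1 : a + b + 2 - 2 = a + b := by omega
    have e2 : a + 1 - 1 = a := by omega
    have e3 : a + b + 2 - (a + 1) - 1 = b := by omega
    simp only [polyaHp, e1, e2, e3]
    push_cast; ring
  have eH1 : polyaHp p (a + 1 + 1, a + b + 2 + 1)
      = ((a:ℝ) + b + 2) * (Nat.choose (a + b + 1) (a + 1) : ℝ) * p ^ (a + 1) * (1 - p) ^ b := by
    have e1 : a + b + 2 + 1 - 2 = a + b + 1 := by omega
    have e2 : a + 1 + 1 - 1 = a + 1 := by omega
    have e3 : a + b + 2 + 1 - (a + 1 + 1) - 1 = b := by omega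
    simp only [polyaHp, e1, e2, e3]
    push_cast; ring
  have eH2 : polyaHp p (a + 1, a + b + 2 + 1)
      = ((a:ℝ) + b + 2) * (Nat.choose (a + b + 1) a : ℝ) * p ^ a * (1 - p) ^ (b + 1) := by
    have e1 : a + b + 2 + 1 - 2 = a + b + 1 := by omega
    have e2 : a + 1 - 1 = a := by omega
    have e3 : a + b + 2 + 1 - (a + 1) - 1 = b + 1 := by omega
    simp only [polyaHp, e1, e2, e3]
    push_cast; ring
  -- combinatorial identities
  have k1 : ((a:ℝ) + 1) * (Nat.choose (a + b + 1) (a + 1) : ℝ)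
      = ((a:ℝ) + b + 1) * (Nat.choose (a + b) a : ℝ) := by
    have := Nat.add_one_mul_choose_eq (a + b) a
    have h' : (a + b + 1) * Nat.choose (a + b) a = Nat.choose (a + b + 1) (a + 1) * (a + 1) := this
    have := congrArg (Nat.cast (R := ℝ)) h'
    push_cast at this; linarith [this]
  have k2 : ((b:ℝ) + 1) * (Nat.choose (a + b + 1) a : ℝ)
      = ((a:ℝ) + b + 1) * (Nat.choose (a + b) a : ℝ) := by
    have s1 : Nat.choose (a + b + 1) a = Nat.choose (a + b + 1) (b + 1) := by
      rw [← Nat.choose_symm (by omega : b + 1 ≤ a + b + 1)]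
      congr 1; omega
    have s2 : Nat.choose (a + b) a = Nat.choose (a + b) b := by
      rw [← Nat.choose_symm (by omega : b ≤ a + b)]
      congr 1; omega
    have h' : (a + b + 1) * Nat.choose (a + b) b = Nat.choose (a + b + 1) (b + 1) * (b + 1) := by
      have := Nat.add_one_mul_choose_eq (a + b) b
      simpa using this
    rw [s1, s2]
    have := congrArg (Nat.cast (R := ℝ)) h'
    push_cast at this; linarith [this]
  have hHne : polyaHp p (a + 1, a + b + 2) ≠ 0 := by
    rw [eH]
    have hc : (0:ℝ) < (Nat.choose (a + b) a : ℝ) := by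
      exact_mod_cast Nat.choose_pos (by omega)
    positivity
  have htne : ((a:ℝ) + b + 2) ≠ 0 := by positivity
  -- transition probabilities at the two successor states
  have eP1 : polyaP (a + 1, a + b + 2) (a + 1 + 1, a + b + 2 + 1) = ((a:ℝ) + 1) / ((a:ℝ) + b + 2) := by
    simp only [polyaP]; norm_num
  have eP2 : polyaP (a + 1, a + b + 2) (a + 1, a + b + 2 + 1) = 1 - ((a:ℝ) + 1) / ((a:ℝ) + b + 2) := by
    simp only [polyaP]; norm_num
  -- the two key product identities
  have key1 : polyaP (a + 1, a + b + 2) (a + 1 + 1, a + b + 2 + 1) * polyaHp p (a + 1 + 1, a + b + 2 + 1)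
      = p * polyaHp p (a + 1, a + b + 2) := by
    rw [eP1, eH1, eH]
    rw [div_mul_eq_mul_div, div_eq_iff htne]
    linear_combination ((a:ℝ) + b + 2) * p ^ (a + 1) * (1 - p) ^ b * k1
  have key2 : polyaP (a + 1, a + b + 2) (a + 1, a + b + 2 + 1) * polyaHp p (a + 1, a + b + 2 + 1)
      = (1 - p) * polyaHp p (a + 1, a + b + 2) := by
    rw [eP2, eH2, eH]
    have : (1 : ℝ) - ((a:ℝ) + 1) / ((a:ℝ) + b + 2) = ((b:ℝ) + 1) / ((a:ℝ) + b + 2) := by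
      field_simp; ring
    rw [this]
    rw [div_mul_eq_mul_div, div_eq_iff htne]
    linear_combination ((a:ℝ) + b + 2) * p ^ a * (1 - p) ^ (b + 1) * k2
  refine ⟨?_, ?_, ?_⟩
  · -- harmonicity
    have hsum : ∑' y : ℕ × ℕ, polyaP (a + 1, a + b + 2) y * polyaHp p y
        = ∑ y ∈ ({(a + 1 + 1, a + b + 2 + 1), (a + 1, a + b + 2 + 1)} : Finset (ℕ × ℕ)),
            polyaP (a + 1, a + b + 2) y * polyaHp p y := by
      refine tsum_eq_sum ?_
      intro y hy
      simp only [Finset.mem_insert, Finset.mem_singleton] at hy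
      push_neg at hy
      have : polyaP (a + 1, a + b + 2) y = 0 := by
        simp only [polyaP, if_neg hy.1, if_neg hy.2]
      rw [this, zero_mul]
    rw [hsum, Finset.sum_insert (by simp), Finset.sum_singleton, key1, key2]
    ring
  · rw [key1, mul_div_assoc, div_self hHne, mul_one]
  · rw [key2, mul_div_assoc, div_self hHne, mul_one]
end
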